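/- arXiv:1306.5495 — 5 statements merged into one kernel-verified Lean document; each statement's English description precedes it below -/
import Mathlib

section
/- Let K be an algebraically closed field and let A be an algebraic ring over K (an affine algebraic variety with regular addition and multiplication maps making it an associative unital ring). Then the group of units A^× is a nonempty principal open subset of A, and the inversion map A^× → A^×, t ↦ t^{-1}, is regular, so (A^×, ·) is an algebraic group. -/
open MvPolynomial

/-- A map `𝔸ⁿ → 𝔸ᵐ` is a polynomial (regular) map if each coordinate is given by a
polynomial. -/
def IsPolyMap {K : Type*} [Field K] {n m : ℕ} (f : (Fin n → K) → (Fin m → K)) : Prop :=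
  ∀ j : Fin m, ∃ p : MvPolynomial (Fin n) K, ∀ x, f x j = eval x p

/-- A two-variable polynomial (regular) map `𝔸ⁿ × 𝔸ⁿ → 𝔸ᵐ`. -/
def IsPolyMap₂ {K : Type*} [Field K] {n m : ℕ}
    (f : (Fin n → K) → (Fin n → K) → (Fin m → K)) : Prop :=
  ∀ j : Fin m, ∃ p : MvPolynomial (Fin n ⊕ Fin n) K,
    ∀ x y, f x y j = eval (Sum.elim x y) p

/-- An (affine) algebraic subset of `𝔸ⁿ`: the common zero locus of a family of
polynomials. -/
def IsAlgebraicSet {K : Type*} [Field K] {n : ℕ} (S : Set (Fin n → K)) : Prop :=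
  ∃ E : Set (MvPolynomial (Fin n) K), S = {x | ∀ p ∈ E, eval x p = 0}

/-- The Zariski topology on affine `n`-space over `K`. -/
def zariskiTop (K : Type*) [Field K] (n : ℕ) : TopologicalSpace (Fin n → K) :=
  TopologicalSpace.generateFrom
    {U | ∃ p : MvPolynomial (Fin n) K, U = {x | eval x p ≠ 0}}

/-- A map defined on a subset `S ⊆ 𝔸ⁿ` is regular on `S` if at each point of `S` it is
locally a ratio of polynomials. -/
def IsRegularOn {K : Type*} [Field K] {n m : ℕ} (S : Set (Fin n → K))
    (f : (Fin n → K) → (Fin m → K)) : Prop :=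
  ∀ x ∈ S, ∀ j : Fin m, ∃ p q : MvPolynomial (Fin n) K,
    eval x q ≠ 0 ∧ ∀ y ∈ S, eval y q ≠ 0 → eval y q * f y j = eval y p

/-- An algebraic ring over `K`: an affine algebraic set together with regular
(polynomial) addition, negation, and multiplication maps making it an associative
unital ring. -/
structure AlgebraicRing (K : Type*) [Field K] where
  n : ℕ
  carrier : Set (Fin n → K)
  carrier_closed : IsAlgebraicSet carrier
  add : (Fin n → K) → (Fin n → K) → (Fin n → K)
  mul : (Fin n → K) → (Fin n → K) → (Fin n → K)
  neg : (Fin n → K) → (Fin n → K)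
  zero : Fin n → K
  one : Fin n → K
  add_poly : IsPolyMap₂ add
  mul_poly : IsPolyMap₂ mul
  neg_poly : IsPolyMap neg
  zero_mem : zero ∈ carrier
  one_mem : one ∈ carrier
  add_mem : ∀ ⦃x y⦄, x ∈ carrier → y ∈ carrier → add x y ∈ carrier
  mul_mem : ∀ ⦃x y⦄, x ∈ carrier → y ∈ carrier → mul x y ∈ carrier
  neg_mem : ∀ ⦃x⦄, x ∈ carrier → neg x ∈ carrier
  add_assoc' : ∀ x ∈ carrier, ∀ y ∈ carrier, ∀ z ∈ carrier,
    add (add x y) z = add x (add y z)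
  add_comm' : ∀ x ∈ carrier, ∀ y ∈ carrier, add x y = add y x
  zero_add' : ∀ x ∈ carrier, add zero x = x
  add_zero' : ∀ x ∈ carrier, add x zero = x
  neg_add_cancel' : ∀ x ∈ carrier, add (neg x) x = zero
  mul_assoc' : ∀ x ∈ carrier, ∀ y ∈ carrier, ∀ z ∈ carrier,
    mul (mul x y) z = mul x (mul y z)
  one_mul' : ∀ x ∈ carrier, mul one x = x
  mul_one' : ∀ x ∈ carrier, mul x one = x
  zero_mul' : ∀ x ∈ carrier, mul zero x = zero
  mul_zero' : ∀ x ∈ carrier, mul x zero = zero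
  left_distrib' : ∀ x ∈ carrier, ∀ y ∈ carrier, ∀ z ∈ carrier,
    mul x (add y z) = add (mul x y) (mul x z)
  right_distrib' : ∀ x ∈ carrier, ∀ y ∈ carrier, ∀ z ∈ carrier,
    mul (add x y) z = add (mul x z) (mul y z)

namespace AlgebraicRing

variable {K : Type*} [Field K]

/-- The Zariski topology on (the points of) an algebraic ring. -/
instance (A : AlgebraicRing K) : TopologicalSpace A.carrier :=
  TopologicalSpace.induced Subtype.val (zariskiTop K A.n)

/-- The set of (two-sided) units of an algebraic ring. -/
def units (A : AlgebraicRing K) : Set (Fin A.n → K) :=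
  {x | x ∈ A.carrier ∧ ∃ y ∈ A.carrier, A.mul x y = A.one ∧ A.mul y x = A.one}

end AlgebraicRing

namespace AlgebraicRingAux

open AlgebraicRing Finset

attribute [local instance] Classical.propDecidable

variable {K : Type*} [Field K]

/-- The opposite algebraic ring (multiplication reversed). -/
def opp (A : AlgebraicRing K) : AlgebraicRing K where
  n := A.n
  carrier := A.carrier
  carrier_closed := A.carrier_closed
  add := A.add
  mul := fun x y => A.mul y x
  neg := A.neg
  zero := A.zero
  one := A.one
  add_poly := A.add_poly
  mul_poly := by
    intro j
    obtain ⟨p, hp⟩ := A.mul_poly j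
    refine ⟨rename Sum.swap p, fun x y => ?_⟩
    rw [eval_rename]
    have : (Sum.elim x y ∘ Sum.swap) = Sum.elim y x := by
      funext s; cases s <;> rfl
    rw [this]
    exact hp y x
  neg_poly := A.neg_poly
  zero_mem := A.zero_mem
  one_mem := A.one_mem
  add_mem := A.add_mem
  mul_mem := fun x y hx hy => A.mul_mem hy hx
  neg_mem := A.neg_mem
  add_assoc' := A.add_assoc'
  add_comm' := A.add_comm'
  zero_add' := A.zero_add'
  add_zero' := A.add_zero'
  neg_add_cancel' := A.neg_add_cancel'
  mul_assoc' := fun x hx y hy z hz => (A.mul_assoc' z hz y hy x hx).symm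
  one_mul' := A.mul_one'
  mul_one' := A.one_mul'
  zero_mul' := A.mul_zero'
  mul_zero' := A.zero_mul'
  left_distrib' := fun x hx y hy z hz => A.right_distrib' y hy z hz x hx
  right_distrib' := fun x hx y hy z hz => A.left_distrib' z hz x hx y hy

section Core

variable (A : AlgebraicRing K)

/-- A choice of polynomials representing multiplication. -/
noncomputable def mulp (j : Fin A.n) : MvPolynomial (Fin A.n ⊕ Fin A.n) K :=
  Classical.choose (A.mul_poly j)

lemma mulp_spec (x y : Fin A.n → K) (j : Fin A.n) :
    A.mul x y j = eval (Sum.elim x y) (mulp A j) :=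
  Classical.choose_spec (A.mul_poly j) x y

/-- The polynomial expressing `y ↦ (A.mul z y) j`. -/
noncomputable def lsub (z : Fin A.n → K) (j : Fin A.n) : MvPolynomial (Fin A.n) K :=
  eval₂ C (Sum.elim (fun i => C (z i)) X) (mulp A j)

lemma eval_lsub (z x : Fin A.n → K) (j : Fin A.n) :
    eval x (lsub A z j) = A.mul z x j := by
  rw [lsub, ← eval_assoc, mulp_spec]
  have : (eval x ∘ Sum.elim (fun i => (C (z i) : MvPolynomial (Fin A.n) K)) X)
      = Sum.elim z x := by
    funext s; cases s <;> simp
  rw [this]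

/-- Functions on the points of `A`. -/
abbrev Fn := (↥A.carrier → K)

/-- Left translation of functions: `(Tlin x f) c = f (x * c)`. -/
noncomputable def Tlin (x : Fin A.n → K) : Fn A →ₗ[K] Fn A where
  toFun f := fun c => if h : A.mul x c.1 ∈ A.carrier then f ⟨A.mul x c.1, h⟩ else 0
  map_add' f g := by
    funext c; by_cases h : A.mul x c.1 ∈ A.carrier <;> simp [h]
  map_smul' a f := by
    funext c; by_cases h : A.mul x c.1 ∈ A.carrier <;> simp [h]

lemma Tlin_apply {x : Fin A.n → K} (hx : x ∈ A.carrier) (f : Fn A) (c : ↥A.carrier) :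
    Tlin A x f c = f ⟨A.mul x c.1, A.mul_mem hx c.2⟩ :=
  dif_pos _

lemma Tlin_comp {z x : Fin A.n → K} (hz : z ∈ A.carrier) (hx : x ∈ A.carrier) :
    (Tlin A x).comp (Tlin A z) = Tlin A (A.mul z x) := by
  refine LinearMap.ext fun f => funext fun c => ?_
  rw [LinearMap.comp_apply, Tlin_apply A hx, Tlin_apply A hz,
    Tlin_apply A (A.mul_mem hz hx)]
  congr 1
  exact Subtype.ext (A.mul_assoc' z hz x hx c.1 c.2).symm

lemma Tlin_one : Tlin A A.one = LinearMap.id := by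
  refine LinearMap.ext fun f => funext fun c => ?_
  rw [Tlin_apply A A.one_mem, LinearMap.id_apply]
  congr 1
  exact Subtype.ext (A.one_mul' c.1 c.2)

/-- The `j`-th coordinate function on `A`. -/
def coordFn (j : Fin A.n) : Fn A := fun c => c.1 j

/-- Restriction of a monomial to `A`. -/
def mres (β : Fin A.n →₀ ℕ) : Fn A := fun c => ∏ i, c.1 i ^ β i

/-- Right part of an exponent vector. -/
noncomputable def rpart (γ : Fin A.n ⊕ Fin A.n →₀ ℕ) : Fin A.n →₀ ℕ :=
  (Finsupp.sumFinsuppEquivProdFinsupp γ).2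

/-- Left-part monomial with coefficient. -/
noncomputable def lmono (j : Fin A.n) (γ : Fin A.n ⊕ Fin A.n →₀ ℕ) :
    MvPolynomial (Fin A.n) K :=
  monomial (Finsupp.sumFinsuppEquivProdFinsupp γ).1 (coeff γ (mulp A j))

lemma Tlin_coordFn {x : Fin A.n → K} (hx : x ∈ A.carrier) (j : Fin A.n) :
    Tlin A x (coordFn A j) =
      ∑ γ ∈ (mulp A j).support, eval x (lmono A j γ) • mres A (rpart A γ) := by
  funext c
  rw [Tlin_apply A hx]
  have hl : coordFn A j ⟨A.mul x c.1, A.mul_mem hx c.2⟩ = eval (Sum.elim x c.1) (mulp A j) :=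
    mulp_spec A x c.1 j
  rw [hl, eval_eq']
  rw [Finset.sum_apply]
  refine Finset.sum_congr rfl fun γ _ => ?_
  rw [Pi.smul_apply, smul_eq_mul, lmono, eval_monomial, Finsupp.prod_pow, mres]
  rw [Fintype.prod_sum_type]
  have h1 : ∀ i : Fin A.n, (Finsupp.sumFinsuppEquivProdFinsupp γ).1 i = γ (Sum.inl i) :=
    fun i => Finsupp.fst_sumFinsuppEquivProdFinsupp γ i
  have h2 : ∀ i : Fin A.n, rpart A γ i = γ (Sum.inr i) :=
    fun i => Finsupp.snd_sumFinsuppEquivProdFinsupp γ i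
  simp only [h1, h2, Sum.elim_inl, Sum.elim_inr]
  ring

end Core

end AlgebraicRingAux
namespace AlgebraicRingAux

open AlgebraicRing Finset

variable {K : Type*} [Field K]

section Core2

variable (A : AlgebraicRing K)

/-- Generators of the finite-dimensional space of functions. -/
def gens : Set (Fn A) :=
  Set.range (coordFn A) ∪ {g | ∃ z ∈ A.carrier, ∃ j, g = Tlin A z (coordFn A j)}

/-- The finite-dimensional space of functions on which translations act. -/
noncomputable def V : Submodule K (Fn A) := Submodule.span K (gens A)

lemma coordFn_mem_V (j : Fin A.n) : coordFn A j ∈ V A :=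
  Submodule.subset_span (Set.mem_union_left _ ⟨j, rfl⟩)

lemma TlinCoord_mem_V {z : Fin A.n → K} (hz : z ∈ A.carrier) (j : Fin A.n) :
    Tlin A z (coordFn A j) ∈ V A :=
  Submodule.subset_span (Set.mem_union_right _ ⟨z, hz, j, rfl⟩)

/-- Exponents of monomials spanning a space containing `V`. -/
noncomputable def bigM : Finset (Fin A.n →₀ ℕ) :=
  (Finset.univ.biUnion fun j => (mulp A j).support.image (rpart A)) ∪
    Finset.univ.image fun j => Finsupp.single j 1

lemma coordFn_eq_mres (j : Fin A.n) : coordFn A j = mres A (Finsupp.single j 1) := by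
  funext c
  simp only [mres, coordFn, Finsupp.single_apply]
  rw [Finset.prod_eq_single j]
  · simp
  · intro i _ hij
    rw [if_neg (Ne.symm hij), pow_zero]
  · intro h; exact absurd (Finset.mem_univ j) h

lemma V_le_W : V A ≤ Submodule.span K (mres A '' ↑(bigM A)) := by
  rw [V, Submodule.span_le]
  rintro g (⟨j, rfl⟩ | ⟨z, hz, j, rfl⟩)
  · refine Submodule.subset_span ⟨Finsupp.single j 1, Finset.mem_coe.2 ?_,
      (coordFn_eq_mres A j).symm⟩
    exact Finset.mem_union_right _ (Finset.mem_image.2 ⟨j, Finset.mem_univ j, rfl⟩)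
  · rw [Tlin_coordFn A hz j]
    refine Submodule.sum_mem _ fun γ hγ => Submodule.smul_mem _ _
      (Submodule.subset_span ⟨rpart A γ, Finset.mem_coe.2 ?_, rfl⟩)
    exact Finset.mem_union_left _ (Finset.mem_biUnion.2
      ⟨j, Finset.mem_univ j, Finset.mem_image.2 ⟨γ, hγ, rfl⟩⟩)

lemma fd_V : FiniteDimensional K (V A) :=
  haveI : FiniteDimensional K (Submodule.span K (mres A '' ↑(bigM A))) :=
    FiniteDimensional.span_of_finite K ((bigM A).finite_toSet.image _)
  Submodule.finiteDimensional_of_le (V_le_W A)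

lemma Tlin_mem_V {x : Fin A.n → K} (hx : x ∈ A.carrier) {f : Fn A} (hf : f ∈ V A) :
    Tlin A x f ∈ V A := by
  induction hf using Submodule.span_induction with
  | mem g hg =>
    rcases hg with ⟨j, rfl⟩ | ⟨z, hz, j, rfl⟩
    · exact TlinCoord_mem_V A hx j
    · have : Tlin A x (Tlin A z (coordFn A j)) = Tlin A (A.mul z x) (coordFn A j) :=
        DFunLike.congr_fun (Tlin_comp A hz hx) (coordFn A j)
      rw [this]
      exact TlinCoord_mem_V A (A.mul_mem hz hx) j
  | zero => rw [map_zero]; exact Submodule.zero_mem _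
  | add f g hf hg ihf ihg => rw [map_add]; exact Submodule.add_mem _ ihf ihg
  | smul a f hf ih => rw [map_smul]; exact Submodule.smul_mem _ _ ih

/-- The translation operator restricted to `V`. -/
noncomputable def TV {x : Fin A.n → K} (hx : x ∈ A.carrier) : V A →ₗ[K] V A :=
  (Tlin A x).restrict fun _ hf => Tlin_mem_V A hx hf

lemma TV_coe {x : Fin A.n → K} (hx : x ∈ A.carrier) (v : V A) :
    (TV A hx v : Fn A) = Tlin A x ↑v := rfl

lemma TV_comp {z x w : Fin A.n → K} (hz : z ∈ A.carrier) (hx : x ∈ A.carrier)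
    (hw : w ∈ A.carrier) (h : A.mul z x = w) :
    (TV A hx).comp (TV A hz) = TV A hw := by
  subst h
  refine LinearMap.ext fun v => Subtype.ext ?_
  rw [LinearMap.comp_apply, TV_coe, TV_coe, TV_coe]
  exact DFunLike.congr_fun (Tlin_comp A hz hx) ↑v

lemma TV_one : TV A A.one_mem = LinearMap.id := by
  refine LinearMap.ext fun v => Subtype.ext ?_
  rw [TV_coe]
  rw [Tlin_one]
  rfl

lemma key0 (ℓ : Fn A →ₗ[K] K) (j : Fin A.n) :
    ∃ P : MvPolynomial (Fin A.n) K, ∀ x ∈ A.carrier,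
      ℓ (Tlin A x (coordFn A j)) = eval x P := by
  refine ⟨∑ γ ∈ (mulp A j).support, C (ℓ (mres A (rpart A γ))) * lmono A j γ,
    fun x hx => ?_⟩
  rw [Tlin_coordFn A hx, map_sum, map_sum]
  refine Finset.sum_congr rfl fun γ _ => ?_
  rw [map_smul, map_mul, eval_C, smul_eq_mul, mul_comm]

lemma key (ℓ : Fn A →ₗ[K] K) {f : Fn A} (hf : f ∈ V A) :
    ∃ P : MvPolynomial (Fin A.n) K, ∀ x ∈ A.carrier,
      ℓ (Tlin A x f) = eval x P := by
  induction hf using Submodule.span_induction with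
  | mem g hg =>
    rcases hg with ⟨j, rfl⟩ | ⟨z, hz, j, rfl⟩
    · exact key0 A ℓ j
    · obtain ⟨P0, hP0⟩ := key0 A ℓ j
      refine ⟨eval₂ C (lsub A z) P0, fun x hx => ?_⟩
      have h1 : Tlin A x (Tlin A z (coordFn A j)) = Tlin A (A.mul z x) (coordFn A j) :=
        DFunLike.congr_fun (Tlin_comp A hz hx) _
      rw [h1, hP0 _ (A.mul_mem hz hx), ← eval_assoc]
      have : (eval x ∘ lsub A z) = A.mul z x := funext fun i => eval_lsub A z x i
      rw [this]
  | zero => exact ⟨0, fun x _ => by rw [map_zero, map_zero, map_zero]⟩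
  | add f g hf hg ihf ihg =>
    obtain ⟨P1, h1⟩ := ihf
    obtain ⟨P2, h2⟩ := ihg
    exact ⟨P1 + P2, fun x hx => by rw [map_add, map_add, h1 x hx, h2 x hx, map_add]⟩
  | smul a f hf ih =>
    obtain ⟨P, h⟩ := ih
    exact ⟨C a * P, fun x hx => by
      rw [map_smul, map_smul, smul_eq_mul, h x hx, map_mul, eval_C]⟩

end Core2

end AlgebraicRingAux
namespace AlgebraicRingAux

open AlgebraicRing Finset Matrix

variable {K : Type*} [Field K]

theorem master (A : AlgebraicRing K) :
    ∃ P : MvPolynomial (Fin A.n) K,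
      (∀ x ∈ A.carrier,
        (∃ y ∈ A.carrier, A.mul x y = A.one ∧ A.mul y x = A.one) → eval x P ≠ 0) ∧
      (∀ x ∈ A.carrier, eval x P ≠ 0 → ∀ y ∈ A.carrier, ∀ y' ∈ A.carrier,
        A.mul x y = A.mul x y' → y = y') ∧
      (∀ j : Fin A.n, ∃ Pj : MvPolynomial (Fin A.n) K, ∀ x ∈ A.carrier, ∀ w ∈ A.carrier,
        A.mul x w = A.one → A.mul w x = A.one → eval x P * w j = eval x Pj) := by
  classical
  haveI : FiniteDimensional K (V A) := fd_V A
  set ι := Fin (Module.finrank K (V A)) with hι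
  let b : Module.Basis ι K (V A) := Module.finBasis K (V A)
  obtain ⟨Q, hQ⟩ := Submodule.exists_isCompl (V A)
  let π : Fn A →ₗ[K] V A := Submodule.projectionOnto _ _ hQ
  let φ : ι → (Fn A →ₗ[K] K) := fun k => (b.coord k).comp π
  have hφ : ∀ (k : ι) (v : V A), φ k ↑v = b.repr v k := fun k v => by
    simp only [φ, π, LinearMap.comp_apply, Submodule.projectionOnto_apply_left hQ v,
      Module.Basis.coord_apply]
  choose Pm hPm using fun (k i : ι) => key A (φ k) (b i).2
  let PM : Matrix ι ι (MvPolynomial (Fin A.n) K) := Matrix.of Pm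
  have hmat : ∀ {x : Fin A.n → K} (hx : x ∈ A.carrier),
      LinearMap.toMatrix b b (TV A hx) = PM.map (eval x) := by
    intro x hx
    ext k i
    rw [LinearMap.toMatrix_apply, Matrix.map_apply]
    have h1 : TV A hx (b i) = ⟨Tlin A x ↑(b i), Tlin_mem_V A hx (b i).2⟩ :=
      LinearMap.restrict_apply _ (b i)
    rw [h1, ← hφ k ⟨Tlin A x ↑(b i), Tlin_mem_V A hx (b i).2⟩]
    exact hPm k i x hx
  have hdet : ∀ {x : Fin A.n → K} (hx : x ∈ A.carrier),
      (LinearMap.toMatrix b b (TV A hx)).det = eval x PM.det := by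
    intro x hx
    have h2 := (RingHom.map_det (eval x : MvPolynomial (Fin A.n) K →+* K) PM).symm
    rw [RingHom.mapMatrix_apply] at h2
    rw [hmat hx]
    exact h2
  refine ⟨PM.det, ?_, ?_, ?_⟩
  · rintro x hx ⟨y, hy, hxy, hyx⟩
    have h2 : (TV A hx).comp (TV A hy) = TV A A.one_mem := TV_comp A hy hx A.one_mem hyx
    have hd : eval x PM.det * (LinearMap.toMatrix b b (TV A hy)).det = 1 := by
      rw [← hdet hx, ← Matrix.det_mul, ← LinearMap.toMatrix_comp b b b, h2, TV_one,
        LinearMap.toMatrix_id, Matrix.det_one]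
    intro h0
    rw [h0, zero_mul] at hd
    exact zero_ne_one hd
  · intro x hx hne y hy y' hy' hmul
    have hU : IsUnit (LinearMap.toMatrix b b (TV A hx)).det := by
      rw [hdet hx]; exact isUnit_iff_ne_zero.2 hne
    have hsurj : ∀ v : V A, ∃ u : V A, TV A hx u = v := fun v => by
      obtain ⟨u, hu⟩ := (LinearEquiv.ofIsUnitDet hU).surjective v
      exact ⟨u, by rw [← LinearEquiv.ofIsUnitDet_apply hU]; exact hu⟩
    funext j
    obtain ⟨g, hg⟩ := hsurj ⟨coordFn A j, coordFn_mem_V A j⟩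
    have hgv : Tlin A x ↑g = coordFn A j := by
      rw [← TV_coe A hx g, hg]
    have e1 := congrFun hgv ⟨y, hy⟩
    have e2 := congrFun hgv ⟨y', hy'⟩
    rw [Tlin_apply A hx] at e1 e2
    have hsub : (⟨A.mul x y, A.mul_mem hx hy⟩ : ↥A.carrier)
        = ⟨A.mul x y', A.mul_mem hx hy'⟩ := Subtype.ext hmul
    calc y j = coordFn A j ⟨y, hy⟩ := rfl
      _ = (g : Fn A) ⟨A.mul x y, A.mul_mem hx hy⟩ := e1.symm
      _ = (g : Fn A) ⟨A.mul x y', A.mul_mem hx hy'⟩ := by rw [hsub]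
      _ = coordFn A j ⟨y', hy'⟩ := e2
      _ = y' j := rfl
  · intro j
    set ε : V A := ⟨coordFn A j, coordFn_mem_V A j⟩ with hε
    set r : ι → K := fun i => b.repr ε i with hr
    set a : ι → K := fun k => (↑(b k) : Fn A) ⟨A.one, A.one_mem⟩ with ha
    refine ⟨∑ k, C (a k) * ∑ i, PM.adjugate k i * C (r i), ?_⟩
    intro x hx w hw hxw hwx
    set Nw := LinearMap.toMatrix b b (TV A hw) with hNw
    have h1 : (TV A hx).comp (TV A hw) = TV A A.one_mem := TV_comp A hw hx A.one_mem hwx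
    have hNmul : (PM.map (eval x)) * Nw = 1 := by
      rw [← hmat hx, hNw, ← LinearMap.toMatrix_comp b b b, h1, TV_one, LinearMap.toMatrix_id]
    have hsmul : eval x PM.det • Nw = (PM.adjugate).map (eval x) := by
      have hadj : ((PM.map (eval x)).adjugate : Matrix ι ι K) = (PM.adjugate).map (eval x) := by
        have := RingHom.map_adjugate (eval x : MvPolynomial (Fin A.n) K →+* K) PM
        rw [RingHom.mapMatrix_apply, RingHom.mapMatrix_apply] at this
        exact this.symm
      have hdet2 : (PM.map (eval x : MvPolynomial (Fin A.n) K →+* K)).det = eval x PM.det := by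
        have h2 := (RingHom.map_det (eval x : MvPolynomial (Fin A.n) K →+* K) PM).symm
        rw [RingHom.mapMatrix_apply] at h2
        exact h2
      calc eval x PM.det • Nw = ((PM.map (eval x)).det • (1 : Matrix ι ι K)) * Nw := by
            rw [Matrix.smul_mul, Matrix.one_mul, hdet2]
        _ = ((PM.map (eval x)).adjugate * (PM.map (eval x))) * Nw := by
            rw [Matrix.adjugate_mul]
        _ = (PM.map (eval x)).adjugate * ((PM.map (eval x)) * Nw) := Matrix.mul_assoc _ _ _
        _ = (PM.adjugate).map (eval x) := by rw [hNmul, Matrix.mul_one, hadj]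
    -- compute w j
    have e4 : ((TV A hw) ε : Fn A) ⟨A.one, A.one_mem⟩ = w j := by
      rw [TV_coe, Tlin_apply A hw]
      show (A.mul w A.one) j = w j
      rw [A.mul_one' w hw]
    have e5 : ((TV A hw) ε : Fn A) ⟨A.one, A.one_mem⟩
        = ∑ k, b.repr (TV A hw ε) k * a k := by
      conv_lhs => rw [← b.sum_repr (TV A hw ε)]
      rw [Submodule.coe_sum, Finset.sum_apply]
      exact Finset.sum_congr rfl fun k _ => by
        rw [Submodule.coe_smul, Pi.smul_apply, smul_eq_mul]
    have e6 : ∀ k : ι, b.repr (TV A hw ε) k = (Nw *ᵥ r) k := fun k => by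
      rw [hNw]
      have := LinearMap.toMatrix_mulVec_repr b b (TV A hw) ε
      rw [← this]
    have hwj : w j = ∑ k, (Nw *ᵥ r) k * a k := by
      rw [← e4, e5]
      exact Finset.sum_congr rfl fun k _ => by rw [e6 k]
    calc eval x PM.det * w j
        = ∑ k, (eval x PM.det • (Nw *ᵥ r)) k * a k := by
          rw [hwj, Finset.mul_sum]
          exact Finset.sum_congr rfl fun k _ => by
            rw [Pi.smul_apply, smul_eq_mul, mul_assoc]
      _ = ∑ k, (((PM.adjugate).map (eval x)) *ᵥ r) k * a k := by
          rw [← Matrix.smul_mulVec, hsmul]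
      _ = eval x (∑ k, C (a k) * ∑ i, PM.adjugate k i * C (r i)) := by
          rw [map_sum]
          refine Finset.sum_congr rfl fun k _ => ?_
          rw [_root_.map_mul, eval_C, map_sum, Matrix.mulVec, dotProduct]
          rw [mul_comm]
          congr 1
          refine Finset.sum_congr rfl fun i _ => ?_
          rw [_root_.map_mul, eval_C, Matrix.map_apply]


end AlgebraicRingAux
namespace AlgebraicRingAux

open AlgebraicRing

variable {K : Type*} [Field K]

lemma surj_of_inj [IsAlgClosed K] (B : AlgebraicRing K) (x : Fin B.n → K)
    (hx : x ∈ B.carrier)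
    (hinj : ∀ y ∈ B.carrier, ∀ y' ∈ B.carrier, B.mul x y = B.mul x y' → y = y') :
    ∃ y ∈ B.carrier, B.mul x y = B.one := by
  obtain ⟨E, hE⟩ := B.carrier_closed
  have hzl : B.carrier = MvPolynomial.zeroLocus K (Ideal.span E) := by
    rw [MvPolynomial.zeroLocus_span, hE]; rfl
  have hmem : ∀ v : Fin B.n → K, v ∈ MvPolynomial.zeroLocus K (Ideal.span E) ↔ v ∈ B.carrier :=
    fun v => by rw [hzl]
  have hfun : ∀ v : Fin B.n → K, (fun i => eval v (lsub B x i)) = B.mul x v :=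
    fun v => funext fun i => eval_lsub B x v i
  have hmaps : (MvPolynomial.zeroLocus K (Ideal.span E)).MapsTo
      (fun v i => eval v (lsub B x i)) (MvPolynomial.zeroLocus K (Ideal.span E)) := by
    intro v hv
    show (fun i => eval v (lsub B x i)) ∈ MvPolynomial.zeroLocus K (Ideal.span E)
    rw [hfun v]
    exact (hmem _).2 (B.mul_mem hx ((hmem v).1 hv))
  have hinj' : (MvPolynomial.zeroLocus K (Ideal.span E)).InjOn
      (fun v i => eval v (lsub B x i)) := by
    intro v hv v' hv' hvv
    have hvv' : (fun i => eval v (lsub B x i)) = (fun i => eval v' (lsub B x i)) := hvv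
    rw [hfun v, hfun v'] at hvv'
    exact hinj v ((hmem v).1 hv) v' ((hmem v').1 hv') hvv'
  have hsurj := ax_grothendieck_zeroLocus (Ideal.span E) (fun i => lsub B x i) hmaps hinj'
  obtain ⟨y, hy, hyx⟩ := hsurj ((hmem B.one).2 B.one_mem)
  refine ⟨y, (hmem y).1 hy, ?_⟩
  have h3 : (fun i => eval y (lsub B x i)) = B.one := hyx
  rw [hfun y] at h3
  exact h3

end AlgebraicRingAux

/-- For an algebraic ring `A` over an algebraically closed field `K`,
the set of units `A^×` is a nonempty principal open subset of `A`, and inversion is a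
regular map on it (so `(A^×, ·)` is an algebraic group). -/
theorem units_principalOpen_and_inversion_regular (K : Type*) [Field K] [IsAlgClosed K]
    (A : AlgebraicRing K) :
    A.units.Nonempty ∧
    (∃ p : MvPolynomial (Fin A.n) K, A.units = {x ∈ A.carrier | eval x p ≠ 0}) ∧
    ∃ inv : (Fin A.n → K) → (Fin A.n → K),
      (∀ x ∈ A.units,
        inv x ∈ A.units ∧ A.mul x (inv x) = A.one ∧ A.mul (inv x) x = A.one) ∧
      IsRegularOn A.units inv := by
  classical
  open AlgebraicRingAux in
  obtain ⟨P, hPu, hPi, hPc⟩ := AlgebraicRingAux.master A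
  obtain ⟨P', hP'u, hP'i, -⟩ := AlgebraicRingAux.master (AlgebraicRingAux.opp A)
  have hQu : ∀ x ∈ A.carrier,
      (∃ y ∈ A.carrier, A.mul y x = A.one ∧ A.mul x y = A.one) →
        eval x (show MvPolynomial (Fin A.n) K from P') ≠ 0 := hP'u
  have hQi : ∀ x ∈ A.carrier, eval x (show MvPolynomial (Fin A.n) K from P') ≠ 0 →
      ∀ y ∈ A.carrier, ∀ y' ∈ A.carrier, A.mul y x = A.mul y' x → y = y' := hP'i
  -- inversion function
  have exinv : ∀ x ∈ A.units, ∃ w, w ∈ A.carrier ∧ A.mul x w = A.one ∧ A.mul w x = A.one := by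
    rintro x ⟨hx, y, hy, hxy, hyx⟩
    exact ⟨y, hy, hxy, hyx⟩
  choose w hw using exinv
  set inv : (Fin A.n → K) → (Fin A.n → K) :=
    fun x => if h : x ∈ A.units then w x h else 0 with hinv
  have hinvspec : ∀ x (hx : x ∈ A.units),
      inv x ∈ A.carrier ∧ A.mul x (inv x) = A.one ∧ A.mul (inv x) x = A.one := by
    intro x hx
    rw [hinv]
    simp only [dif_pos hx]
    exact hw x hx
  refine ⟨⟨A.one, A.one_mem, A.one, A.one_mem, A.one_mul' A.one A.one_mem,
      A.one_mul' A.one A.one_mem⟩, ⟨P * (show MvPolynomial (Fin A.n) K from P'), ?_⟩, inv, ?_, ?_⟩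
  · ext x
    have hm : eval x (P * (show MvPolynomial (Fin A.n) K from P'))
        = eval x P * eval x (show MvPolynomial (Fin A.n) K from P') := MvPolynomial.eval_mul
    simp only [AlgebraicRing.units, Set.mem_setOf_eq, _root_.map_mul]
    rw [hm]
    constructor
    · rintro ⟨hx, y, hy, hxy, hyx⟩
      refine ⟨hx, mul_ne_zero ?_ ?_⟩
      · exact hPu x hx ⟨y, hy, hxy, hyx⟩
      · exact hQu x hx ⟨y, hy, hyx, hxy⟩
    · rintro ⟨hx, hne⟩
      have h1 : eval x P ≠ 0 := fun h => hne (by rw [h, zero_mul])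
      have h2 : eval x P' ≠ 0 := fun h => hne (by rw [h, mul_zero])
      obtain ⟨y, hy, hxy⟩ := AlgebraicRingAux.surj_of_inj A x hx (hPi x hx h1)
      obtain ⟨z, hz', hzx'⟩ := AlgebraicRingAux.surj_of_inj (AlgebraicRingAux.opp A) x hx
        (fun y hy y' hy' h => hQi x hx h2 y hy y' hy' h)
      have hz : z ∈ A.carrier := hz'
      have hzx : A.mul z x = A.one := hzx'
      have hzy : (show Fin A.n → K from z) = y := by
        calc (show Fin A.n → K from z) = A.mul z A.one := (A.mul_one' z hz).symm
          _ = A.mul z (A.mul x y) := by rw [hxy]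
          _ = A.mul (A.mul z x) y := (A.mul_assoc' z hz x hx y hy).symm
          _ = A.mul A.one y := by rw [hzx]
          _ = y := A.one_mul' y hy
      exact ⟨hx, y, hy, hxy, by rw [← hzy]; exact hzx⟩
  · intro x hx
    obtain ⟨hc, hxi, hix⟩ := hinvspec x hx
    exact ⟨⟨hc, x, hx.1, hix, hxi⟩, hxi, hix⟩
  · intro x hx j
    obtain ⟨Pj, hPj⟩ := hPc j
    refine ⟨Pj, P, ?_, ?_⟩
    · obtain ⟨hxc, y, hy, hxy, hyx⟩ := hx
      exact hPu x hxc ⟨y, hy, hxy, hyx⟩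
    · intro y hy _
      obtain ⟨hc, hxi, hix⟩ := hinvspec y hy
      exact hPj y hy.1 (inv y) hc hxi hix
end

section
/- Let A be a connected algebraic ring over an algebraically closed field K (i.e., an algebraic ring whose underlying variety is irreducible). Then every element of A is a difference of two units: A = A^× − A^×. In particular, A is generated as a ring by its units. -/
open MvPolynomial

lemma eval_bind₁' {σ τ K : Type*} [CommSemiring K] (f : σ → MvPolynomial τ K)
    (p : MvPolynomial σ K) (y : τ → K) :
    eval y (bind₁ f p) = eval (fun i => eval y (f i)) p :=
  eval₂Hom_bind₁ (RingHom.id K) y f p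

lemma injective_of_surjective_ringEnd {R : Type*} [CommRing R] [IsNoetherianRing R]
    (f : R →+* R) (hf : Function.Surjective f) : Function.Injective f := by
  let fp : ℕ → R →+* R := fun k => Nat.rec (RingHom.id R) (fun _ g => f.comp g) k
  have hfp_succ : ∀ k, fp (k + 1) = f.comp (fp k) := fun k => rfl
  have hfp_surj : ∀ k, Function.Surjective (fp k) := by
    intro k; induction k with
    | zero => exact Function.surjective_id
    | succ k ih => exact hf.comp ih
  have hmono : Monotone fun k => RingHom.ker (fp k) := by
    apply monotone_nat_of_le_succ
    intro k a ha
    rw [RingHom.mem_ker] at ha ⊢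
    rw [hfp_succ, RingHom.comp_apply, ha, map_zero]
  obtain ⟨N, hN⟩ := monotone_stabilizes_iff_noetherian.mpr (isNoetherianRing_iff.mp ‹_›) ⟨_, hmono⟩
  rw [injective_iff_map_eq_zero]
  intro a ha
  obtain ⟨b, rfl⟩ := hfp_surj N a
  have hb : b ∈ RingHom.ker (fp (N + 1)) := by
    rw [RingHom.mem_ker, hfp_succ, RingHom.comp_apply, ha]
  have := hN (N + 1) (Nat.le_succ N)
  simp only [OrderHom.coe_mk] at this
  rw [← this] at hb
  exact hb

/-- The vanishing ideal of a set. -/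
def vandIdeal {K : Type*} [Field K] {n : ℕ} (S : Set (Fin n → K)) :
    Ideal (MvPolynomial (Fin n) K) where
  carrier := {p | ∀ y ∈ S, eval y p = 0}
  add_mem' := by intro a b ha hb y hy; simp [ha y hy, hb y hy]
  zero_mem' := by intro y hy; simp
  smul_mem' := by intro c p hp y hy; simp [smul_eq_mul, hp y hy]

lemma mem_vandIdeal {K : Type*} [Field K] {n : ℕ} {S : Set (Fin n → K)}
    {p : MvPolynomial (Fin n) K} : p ∈ vandIdeal S ↔ ∀ y ∈ S, eval y p = 0 := Iff.rfl

set_option maxHeartbeats 1000000 in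
set_option synthInstance.maxHeartbeats 200000 in
theorem exists_det_poly {K : Type*} [Field K] {n : ℕ} (S : Set (Fin n → K))
    (hS : IsAlgebraicSet S)
    (μ : (Fin n → K) → (Fin n → K) → (Fin n → K)) (hμ : IsPolyMap₂ μ)
    (hmem : ∀ ⦃x y⦄, x ∈ S → y ∈ S → μ x y ∈ S)
    (e : Fin n → K) (he : e ∈ S) (hid : ∀ y ∈ S, μ y e = y)
    (hassoc : ∀ x ∈ S, ∀ y ∈ S, ∀ z ∈ S, μ (μ x y) z = μ x (μ y z)) :
    ∃ D : MvPolynomial (Fin n) K, eval e D ≠ 0 ∧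
      ∀ x ∈ S, eval x D ≠ 0 → ∀ z ∈ S, ∃ y ∈ S, μ y x = z := by
  classical
  choose P hP using hμ
  set I : Ideal (MvPolynomial (Fin n) K) := vandIdeal S with hIdef
  let R := MvPolynomial (Fin n) K ⧸ I
  haveI : IsNoetherianRing R :=
    isNoetherianRing_of_surjective _ R (Ideal.Quotient.mk I) Ideal.Quotient.mk_surjective
  let mk : MvPolynomial (Fin n) K →ₐ[K] R := Ideal.Quotient.mkₐ K I
  have hmk0 : ∀ p, (∀ y ∈ S, eval y p = 0) → mk p = 0 := by
    intro p hp
    show Ideal.Quotient.mkₐ K I p = 0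
    rw [Ideal.Quotient.mkₐ_eq_mk, Ideal.Quotient.eq_zero_iff_mem]
    exact hp
  have hmkeq : ∀ p q, (∀ y ∈ S, eval y p = eval y q) → mk p = mk q := by
    intro p q h
    have h0 : mk (p - q) = 0 := hmk0 _ (by intro y hy; simp [h y hy])
    rw [map_sub] at h0
    exact sub_eq_zero.mp h0
  let m : (Fin n → K) → Fin n → MvPolynomial (Fin n) K :=
    fun x i => bind₁ (Sum.elim X (fun j => C (x j))) (P i)
  have hm : ∀ x y i, eval y (m x i) = μ y x i := by
    intro x y i
    rw [show m x i = bind₁ (Sum.elim X (fun j => C (x j))) (P i) from rfl, eval_bind₁', hP i y x]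
    have hfe : (fun i => eval y (Sum.elim X (fun j => C (x j)) i)) = Sum.elim y x := by
      funext s; cases s <;> simp
    rw [hfe]
  let σm : (Fin n → K) → (MvPolynomial (Fin n) K →ₐ[K] MvPolynomial (Fin n) K) :=
    fun x => bind₁ (m x)
  have hσ : ∀ x p y, eval y (σm x p) = eval (μ y x) p := by
    intro x p y
    rw [show σm x p = bind₁ (m x) p from rfl, eval_bind₁']
    have hfe : (fun i => eval y (m x i)) = μ y x := funext (hm x y)
    rw [hfe]
  have hlift : ∀ (x) (_ : x ∈ S), ∀ p ∈ I, (mk.comp (σm x)) p = 0 := by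
    intro x hx p hp
    simp only [AlgHom.comp_apply]
    exact hmk0 _ (fun y hy => by rw [hσ]; exact (mem_vandIdeal.mp hp) (μ y x) (hmem hy hx))
  let θ : ∀ x, x ∈ S → (R →ₐ[K] R) := fun x hx => Ideal.Quotient.liftₐ I (mk.comp (σm x)) (hlift x hx)
  have hθmk : ∀ x hx p, θ x hx (mk p) = mk (σm x p) := by
    intro x hx p
    show Ideal.Quotient.liftₐ I _ _ (Ideal.Quotient.mkₐ K I p) = _
    rw [Ideal.Quotient.liftₐ_apply, Ideal.Quotient.mkₐ_eq_mk]
    rfl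
  let t : Fin n → R := fun j => mk (X j)
  have hθt : ∀ x hx j, θ x hx (t j) = mk (m x j) := by
    intro x hx j
    rw [show t j = mk (X j) from rfl, hθmk x hx]
    congr 1
    exact bind₁_X_right (m x) j
  have hθcomp : ∀ x (hx : x ∈ S) w (hw : w ∈ S) (r : R),
      θ x hx (θ w hw r) = θ (μ x w) (hmem hx hw) r := by
    intro x hx w hw r
    obtain ⟨p, rfl⟩ := Ideal.Quotient.mkₐ_surjective K I r
    rw [show Ideal.Quotient.mkₐ K I p = mk p from rfl, hθmk w hw, hθmk x hx, hθmk (μ x w) (hmem hx hw)]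
    apply hmkeq
    intro y hy
    rw [hσ, hσ, hσ, hassoc y hy x hx w hw]
  have hθe : ∀ (r : R), θ e he r = r := by
    intro r
    obtain ⟨p, rfl⟩ := Ideal.Quotient.mkₐ_surjective K I r
    rw [show Ideal.Quotient.mkₐ K I p = mk p from rfl, hθmk e he]
    apply hmkeq
    intro y hy
    rw [hσ, hid y hy]
  let Y : (Fin n ⊕ Fin n →₀ ℕ) → MvPolynomial (Fin n) K := fun d => ∏ j, X j ^ d (Sum.inl j)
  let q : Fin n → (Fin n ⊕ Fin n →₀ ℕ) → MvPolynomial (Fin n) K :=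
    fun i d => C (coeff d (P i)) * ∏ j, X j ^ d (Sum.inr j)
  have hqeval : ∀ x i d, eval x (q i d) = coeff d (P i) * ∏ j, x j ^ d (Sum.inr j) := by
    intro x i d
    simp [q]
  have hexpand : ∀ x i, m x i = ∑ d ∈ (P i).support, eval x (q i d) • Y d := by
    intro x i
    conv_lhs => rw [show m x i = bind₁ (Sum.elim X (fun j => C (x j))) (P i) from rfl,
      (P i).as_sum]
    rw [map_sum]
    refine Finset.sum_congr rfl ?_
    intro d _
    rw [bind₁_monomial]
    have h1 : (∏ s ∈ d.support, (Sum.elim X (fun j => C (x j)) s) ^ d s)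
        = ∏ s, (Sum.elim X (fun j => C (x j)) s) ^ d s :=
      Finset.prod_subset (Finset.subset_univ _) (by
        intro s _ hs
        rw [Finsupp.notMem_support_iff.mp hs, pow_zero])
    have h2 : (∏ s, (Sum.elim X (fun j => C (x j)) s) ^ d s)
        = (Y d) * C (∏ j, x j ^ d (Sum.inr j)) := by
      rw [Fintype.prod_sum_type]
      simp only [Sum.elim_inl, Sum.elim_inr, ← map_pow, ← map_prod]
      rfl
    rw [h1, h2, hqeval, smul_eq_C_mul, map_mul]
    ring
  let gens : Set R := {r | ∃ x, ∃ hx : x ∈ S, ∃ j, r = θ x hx (t j)}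
  let V : Submodule K R := Submodule.span K gens
  let bigset : Finset R :=
    (Finset.univ : Finset (Fin n)).biUnion (fun i => (P i).support.image (fun d => mk (Y d)))
  have hVle : V ≤ Submodule.span K (bigset : Set R) := by
    rw [Submodule.span_le]
    rintro r ⟨x, hx, j, rfl⟩
    rw [hθt x hx, hexpand x j, map_sum]
    apply Submodule.sum_mem
    intro d hd
    rw [map_smul]
    refine Submodule.smul_mem _ _ (Submodule.subset_span (Finset.mem_coe.mpr ?_))
    exact Finset.mem_biUnion.mpr ⟨j, Finset.mem_univ j, Finset.mem_image_of_mem _ hd⟩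
  haveI hVfd : FiniteDimensional K V := Submodule.finiteDimensional_of_le hVle
  have htV : ∀ j, t j ∈ V := fun j => Submodule.subset_span ⟨e, he, j, (hθe (t j)).symm⟩
  have hstable : ∀ x (hx : x ∈ S), ∀ v ∈ V, θ x hx v ∈ V := by
    intro x hx v hv
    induction hv using Submodule.span_induction with
    | mem r hr =>
      obtain ⟨w, hw, j, rfl⟩ := hr
      rw [hθcomp x hx w hw]
      exact Submodule.subset_span ⟨μ x w, hmem hx hw, j, rfl⟩
    | zero => rw [map_zero]; exact V.zero_mem
    | add a b _ _ ha hb => rw [map_add]; exact V.add_mem ha hb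
    | smul c a _ ha => rw [map_smul]; exact V.smul_mem c ha
  let T : ∀ x, x ∈ S → (V →ₗ[K] V) := fun x hx => ((θ x hx).toLinearMap).restrict (hstable x hx)
  have hTcoe : ∀ x hx (v : V), ((T x hx v : R)) = θ x hx (v : R) := by
    intro x hx v
    exact LinearMap.restrict_coe_apply _ _ _
  let Pol : R → Prop := fun v => ∃ (κ : Type) (_ : Fintype κ) (g : κ → R)
    (qq : κ → MvPolynomial (Fin n) K),
    ∀ x (hx : x ∈ S), θ x hx v = ∑ k, eval x (qq k) • g k
  have hPolV : ∀ v ∈ V, Pol v := by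
    intro v hv
    induction hv using Submodule.span_induction with
    | mem r hr =>
      obtain ⟨w, hw, j, rfl⟩ := hr
      refine ⟨{d // d ∈ (P j).support}, inferInstance, fun d => mk (Y d.1),
        fun d => σm w (q j d.1), ?_⟩
      intro x hx
      rw [hθcomp x hx w hw, hθt (μ x w) (hmem hx hw) j, hexpand (μ x w) j, map_sum]
      rw [← Finset.sum_coe_sort ((P j).support)]
      refine Finset.sum_congr rfl ?_
      intro d _
      rw [map_smul, hσ]
    | zero =>
      exact ⟨Fin 0, inferInstance, fun k => k.elim0, fun k => k.elim0, by
        intro x hx; simp⟩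
    | add a b _ _ iha ihb =>
      obtain ⟨κ₁, _, g₁, q₁, h₁⟩ := iha
      obtain ⟨κ₂, _, g₂, q₂, h₂⟩ := ihb
      refine ⟨κ₁ ⊕ κ₂, inferInstance, Sum.elim g₁ g₂, Sum.elim q₁ q₂, ?_⟩
      intro x hx
      rw [map_add, h₁ x hx, h₂ x hx, Fintype.sum_sum_type]
      simp
    | smul c a _ iha =>
      obtain ⟨κ, _, g, qq, h⟩ := iha
      refine ⟨κ, ‹_›, g, fun k => C c * qq k, ?_⟩
      intro x hx
      rw [map_smul, h x hx, Finset.smul_sum]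
      refine Finset.sum_congr rfl ?_
      intro k _
      rw [smul_smul, map_mul, eval_C]
  let dd := Module.finrank K V
  let b : Module.Basis (Fin dd) K V := Module.finBasis K V
  obtain ⟨W, hW⟩ := Submodule.exists_isCompl V
  let π : R →ₗ[K] V := Submodule.projectionOnto V W hW
  have hπ : ∀ v : V, π (v : R) = v := fun v => Submodule.projectionOnto_apply_left (p := V) (q := W) hW v
  have hPolb : ∀ l : Fin dd, Pol ((b l : R)) := fun l => hPolV _ (b l).2
  choose κ κF g qq hrep using hPolb
  let E : Matrix (Fin dd) (Fin dd) (MvPolynomial (Fin n) K) :=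
    fun l l' => Finset.sum (@Finset.univ _ (κF l')) (fun k => qq l' k * C ((b.repr (π (g l' k))) l))
  have hmat : ∀ x (hx : x ∈ S), E.map (eval x) = LinearMap.toMatrix b b (T x hx) := by
    intro x hx
    ext l l'
    rw [Matrix.map_apply, LinearMap.toMatrix_apply]
    have h2 : T x hx (b l') = π (θ x hx ((b l' : R))) := by
      rw [← hTcoe x hx (b l'), hπ]
    rw [h2, hrep l' x hx, map_sum, map_sum]
    simp only [E, map_sum, map_mul, eval_C, map_smul, Finsupp.coe_finset_sum,
      Finset.sum_apply, Finsupp.smul_apply, smul_eq_mul]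
  let D := E.det
  have hDmat : ∀ x (hx : x ∈ S), eval x D = (LinearMap.toMatrix b b (T x hx)).det := by
    intro x hx
    rw [show eval x D = (E.map (eval x)).det from RingHom.map_det (eval x) E, hmat x hx]
  have hTe : T e he = LinearMap.id := by
    ext v
    show ((T e he v : R)) = (v : R)
    rw [hTcoe e he v, hθe]
  have hDe : eval e D = 1 := by
    rw [hDmat e he, hTe, LinearMap.toMatrix_id, Matrix.det_one]
  refine ⟨D, by rw [hDe]; exact one_ne_zero, ?_⟩
  intro x hx hDx z hz
  have hdet : IsUnit (LinearMap.toMatrix b b (T x hx)).det := by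
    rw [← hDmat x hx]
    exact (isUnit_iff_ne_zero).mpr hDx
  let eV : V ≃ₗ[K] V := LinearEquiv.ofIsUnitDet hdet
  have heV : ∀ v : V, eV v = T x hx v := fun v => by
    rw [← LinearEquiv.coe_ofIsUnitDet hdet]
    rfl
  have hθsurj : Function.Surjective (θ x hx) := by
    have hrange : ∀ j, ∃ r, θ x hx r = t j := by
      intro j
      obtain ⟨v, hv⟩ := eV.surjective ⟨t j, htV j⟩
      refine ⟨(v : R), ?_⟩
      rw [← hTcoe x hx v, ← heV v, hv]
    intro r
    obtain ⟨p, rfl⟩ := Ideal.Quotient.mkₐ_surjective K I r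
    have : ∀ p : MvPolynomial (Fin n) K, ∃ r', θ x hx r' = mk p := by
      intro p
      induction p using MvPolynomial.induction_on with
      | C a =>
        refine ⟨mk (C a), ?_⟩
        rw [hθmk x hx]
        congr 1
        exact bind₁_C_right (m x) a
      | add p1 p2 ih1 ih2 =>
        obtain ⟨r1, hr1⟩ := ih1
        obtain ⟨r2, hr2⟩ := ih2
        exact ⟨r1 + r2, by rw [map_add, hr1, hr2, map_add]⟩
      | mul_X p1 j ih =>
        obtain ⟨r1, hr1⟩ := ih
        obtain ⟨rj, hrj⟩ := hrange j
        exact ⟨r1 * rj, by rw [map_mul, hr1, hrj, map_mul]⟩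
    exact this p
  have hθinj : Function.Injective (θ x hx) :=
    injective_of_surjective_ringEnd ((θ x hx) : R →+* R) hθsurj
  let eR : R ≃+* R := RingEquiv.ofBijective ((θ x hx) : R →+* R) ⟨hθinj, hθsurj⟩
  let evz : R →+* K := Ideal.Quotient.lift I (eval z) (fun p hp => (mem_vandIdeal.mp hp) z hz)
  let χ : R →+* K := evz.comp eR.symm.toRingHom
  have hevz : ∀ p, evz (mk p) = eval z p := by
    intro p
    show Ideal.Quotient.lift I (eval z) _ (Ideal.Quotient.mkₐ K I p) = _
    rw [Ideal.Quotient.mkₐ_eq_mk, Ideal.Quotient.lift_mk]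
  have hχθ : ∀ r, χ (θ x hx r) = evz r := by
    intro r
    show evz (eR.symm (eR r)) = evz r
    rw [RingEquiv.symm_apply_apply]
  let y : Fin n → K := fun j => χ (t j)
  have hχmk : ∀ p, χ (mk p) = eval y p := by
    intro p
    induction p using MvPolynomial.induction_on with
    | C a =>
      have hfix : θ x hx (mk (C a)) = mk (C a) := by
        rw [hθmk x hx]
        congr 1
        exact bind₁_C_right (m x) a
      calc χ (mk (C a)) = χ (θ x hx (mk (C a))) := by rw [hfix]
        _ = evz (mk (C a)) := hχθ _
        _ = eval z (C a) := hevz _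
        _ = a := eval_C a
        _ = eval y (C a) := (eval_C a).symm
    | add p1 p2 ih1 ih2 => rw [map_add, map_add, ih1, ih2, map_add]
    | mul_X p1 j ih =>
      rw [map_mul, map_mul, ih, map_mul]
      congr 1
      show χ (t j) = eval y (X j)
      rw [eval_X]
  have hy : y ∈ S := by
    obtain ⟨Es, hEs⟩ := hS
    rw [hEs]
    intro p hp
    have hpI : p ∈ I := mem_vandIdeal.mpr (by
      intro y' hy'
      rw [hEs] at hy'
      exact hy' p hp)
    have h0 : mk p = 0 := by
      show Ideal.Quotient.mkₐ K I p = 0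
      rw [Ideal.Quotient.mkₐ_eq_mk, Ideal.Quotient.eq_zero_iff_mem]
      exact hpI
    rw [← hχmk p, h0, map_zero]
  refine ⟨y, hy, ?_⟩
  funext j
  have h1 : μ y x j = eval y (m x j) := (hm x y j).symm
  rw [h1, ← hχmk (m x j), ← hθt x hx j, hχθ]
  show evz (mk (X j)) = z j
  rw [hevz, eval_X]


theorem AlgebraicRing.exists_units_poly {K : Type*} [Field K] (A : AlgebraicRing K) :
    ∃ D : MvPolynomial (Fin A.n) K, eval A.one D ≠ 0 ∧
      ∀ x ∈ A.carrier, eval x D ≠ 0 → x ∈ A.units := by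
  obtain ⟨D₁, hD₁e, hD₁⟩ := exists_det_poly A.carrier A.carrier_closed A.mul A.mul_poly
    A.mul_mem A.one A.one_mem A.mul_one' A.mul_assoc'
  have hμ' : IsPolyMap₂ (fun x y => A.mul y x) := by
    intro j
    obtain ⟨p, hp⟩ := A.mul_poly j
    refine ⟨rename Sum.swap p, ?_⟩
    intro x y
    rw [eval_rename]
    rw [show (Sum.elim x y ∘ Sum.swap) = Sum.elim y x from by funext s; cases s <;> rfl]
    exact hp y x
  obtain ⟨D₂, hD₂e, hD₂⟩ := exists_det_poly A.carrier A.carrier_closed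
    (fun x y => A.mul y x) hμ'
    (fun x y hx hy => A.mul_mem hy hx) A.one A.one_mem (fun y hy => A.one_mul' y hy)
    (by
      intro x hx y hy z hz
      exact (A.mul_assoc' z hz y hy x hx).symm)
  refine ⟨D₁ * D₂, by rw [map_mul]; exact mul_ne_zero hD₁e hD₂e, ?_⟩
  intro x hx hDx
  rw [map_mul, mul_ne_zero_iff] at hDx
  obtain ⟨a, ha, hax⟩ := hD₁ x hx hDx.1 A.one A.one_mem
  obtain ⟨b, hb, hxb⟩ := hD₂ x hx hDx.2 A.one A.one_mem
  have hab : a = b := by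
    calc a = A.mul a A.one := (A.mul_one' a ha).symm
    _ = A.mul a (A.mul x b) := by rw [hxb]
    _ = A.mul (A.mul a x) b := (A.mul_assoc' a ha x hx b hb).symm
    _ = A.mul A.one b := by rw [hax]
    _ = b := A.one_mul' b hb
  exact ⟨hx, b, hb, hxb, hab ▸ hax⟩

theorem connected_algebraicRing_eq_units_sub_units (K : Type*) [Field K] [IsAlgClosed K]
    (A : AlgebraicRing K)
    (hconn : @IsIrreducible _ (zariskiTop K A.n) A.carrier) :
    ∀ x ∈ A.carrier, ∃ u ∈ A.units, ∃ v ∈ A.units, x = A.add u (A.neg v) := by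
  intro x hx
  obtain ⟨D, hDe, hD⟩ := AlgebraicRing.exists_units_poly A
  choose aP haP using A.add_poly
  let tr : MvPolynomial (Fin A.n) K :=
    bind₁ (fun i => bind₁ (Sum.elim (fun j => C (x j)) X) (aP i)) D
  have htr : ∀ y, eval y tr = eval (A.add x y) D := by
    intro y
    rw [show tr = bind₁ (fun i => bind₁ (Sum.elim (fun j => C (x j)) X) (aP i)) D from rfl,
      eval_bind₁']
    have hfe : (fun i => eval y (bind₁ (Sum.elim (fun j => C (x j)) X) (aP i))) = A.add x y := by
      funext i
      rw [eval_bind₁']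
      have hfe2 : (fun s => eval y (Sum.elim (fun j => C (x j)) X s)) = Sum.elim x y := by
        funext s; cases s <;> simp
      rw [hfe2, ← haP i x y]
    rw [hfe]
  let U₁ : Set (Fin A.n → K) := {w | eval w D ≠ 0}
  let U₂ : Set (Fin A.n → K) := {w | eval w tr ≠ 0}
  have hU₁ : @IsOpen _ (zariskiTop K A.n) U₁ :=
    TopologicalSpace.isOpen_generateFrom_of_mem ⟨D, rfl⟩
  have hU₂ : @IsOpen _ (zariskiTop K A.n) U₂ :=
    TopologicalSpace.isOpen_generateFrom_of_mem ⟨tr, rfl⟩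
  have h1 : (A.carrier ∩ U₁).Nonempty := ⟨A.one, A.one_mem, hDe⟩
  have hnx : A.neg x ∈ A.carrier := A.neg_mem hx
  have hy₀ : A.add (A.neg x) A.one ∈ A.carrier := A.add_mem hnx A.one_mem
  have hxy₀ : A.add x (A.add (A.neg x) A.one) = A.one := by
    rw [← A.add_assoc' x hx (A.neg x) hnx A.one A.one_mem]
    have hz : A.add x (A.neg x) = A.zero := by
      rw [A.add_comm' x hx (A.neg x) hnx]
      exact A.neg_add_cancel' x hx
    rw [hz]
    exact A.zero_add' A.one A.one_mem
  have h2 : (A.carrier ∩ U₂).Nonempty := by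
    refine ⟨A.add (A.neg x) A.one, hy₀, ?_⟩
    show eval (A.add (A.neg x) A.one) tr ≠ 0
    rw [htr, hxy₀]
    exact hDe
  obtain ⟨v, hvS, hv₁, hv₂⟩ := hconn.2 U₁ U₂ hU₁ hU₂ h1 h2
  have hvunit : v ∈ A.units := hD v hvS hv₁
  have huS : A.add x v ∈ A.carrier := A.add_mem hx hvS
  have huD : eval (A.add x v) D ≠ 0 := by
    have h := hv₂
    show eval (A.add x v) D ≠ 0
    rw [← htr v]
    exact h
  have huunit : A.add x v ∈ A.units := hD _ huS huD
  refine ⟨A.add x v, huunit, v, hvunit, ?_⟩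
  have hnv : A.neg v ∈ A.carrier := A.neg_mem hvS
  have hfin : A.add (A.add x v) (A.neg v) = x := by
    rw [A.add_assoc' x hx v hvS (A.neg v) hnv]
    have hz : A.add v (A.neg v) = A.zero := by
      rw [A.add_comm' v hvS (A.neg v) hnv]
      exact A.neg_add_cancel' v hvS
    rw [hz]
    exact A.add_zero' x hx
  exact hfin.symm
end

section
/- Let R be a commutative semilocal ring, A a connected commutative algebraic ring over an algebraically closed field K, and f: R → A an abstract ring homomorphism with Zariski-dense image. Then the image f(R^×) of the units of R is Zariski-dense in A. -/
open MvPolynomial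

namespace AlgebraicRing

variable {K : Type*} [Field K] (A : AlgebraicRing K)

instance : Add A.carrier := ⟨fun x y => ⟨A.add x.1 y.1, A.add_mem x.2 y.2⟩⟩
instance : Mul A.carrier := ⟨fun x y => ⟨A.mul x.1 y.1, A.mul_mem x.2 y.2⟩⟩
instance : Neg A.carrier := ⟨fun x => ⟨A.neg x.1, A.neg_mem x.2⟩⟩
instance : Zero A.carrier := ⟨⟨A.zero, A.zero_mem⟩⟩
instance : One A.carrier := ⟨⟨A.one, A.one_mem⟩⟩

/-- The points of an algebraic ring form an (abstract) ring. -/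
instance : Ring A.carrier where
  add_assoc x y z := Subtype.ext (A.add_assoc' x.1 x.2 y.1 y.2 z.1 z.2)
  zero_add x := Subtype.ext (A.zero_add' x.1 x.2)
  add_zero x := Subtype.ext (A.add_zero' x.1 x.2)
  nsmul := nsmulRec
  zsmul := zsmulRec
  neg_add_cancel x := Subtype.ext (A.neg_add_cancel' x.1 x.2)
  add_comm x y := Subtype.ext (A.add_comm' x.1 x.2 y.1 y.2)
  mul_assoc x y z := Subtype.ext (A.mul_assoc' x.1 x.2 y.1 y.2 z.1 z.2)
  one_mul x := Subtype.ext (A.one_mul' x.1 x.2)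
  mul_one x := Subtype.ext (A.mul_one' x.1 x.2)
  zero_mul x := Subtype.ext (A.zero_mul' x.1 x.2)
  mul_zero x := Subtype.ext (A.mul_zero' x.1 x.2)
  left_distrib x y z := Subtype.ext (A.left_distrib' x.1 x.2 y.1 y.2 z.1 z.2)
  right_distrib x y z := Subtype.ext (A.right_distrib' x.1 x.2 y.1 y.2 z.1 z.2)

end AlgebraicRing

/-- A commutative algebraic ring over `K`. -/
structure CommAlgebraicRing (K : Type*) [Field K] extends AlgebraicRing K where
  mul_comm' : ∀ x ∈ carrier, ∀ y ∈ carrier, mul x y = mul y x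

namespace CommAlgebraicRing

variable {K : Type*} [Field K] (A : CommAlgebraicRing K)

/-- The points of a commutative algebraic ring form an (abstract) commutative ring. -/
instance : CommRing A.carrier where
  mul_comm x y := Subtype.ext (A.mul_comm' x.1 x.2 y.1 y.2)

end CommAlgebraicRing


section AuxLemmas

open Set Topology

variable {K : Type*} [Field K]

theorem eval_bind₁_aux {σ τ : Type*} (g : τ → K) (h : σ → MvPolynomial τ K)
    (φ : MvPolynomial σ K) :
    eval g (bind₁ h φ) = eval (fun i => eval g (h i)) φ :=
  eval₂Hom_bind₁ _ _ _ _

theorem IsPolyMap.continuous_zariski {n m : ℕ} {φ : (Fin n → K) → (Fin m → K)}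
    (h : IsPolyMap φ) : Continuous[zariskiTop K n, zariskiTop K m] φ := by
  choose p hp using h
  refine continuous_generateFrom_iff.mpr ?_
  rintro s ⟨q, rfl⟩
  refine TopologicalSpace.isOpen_generateFrom_of_mem ⟨bind₁ p q, ?_⟩
  ext x
  simp only [Set.mem_preimage, Set.mem_setOf_eq, eval_bind₁_aux]
  have hx : φ x = fun i => eval x (p i) := funext fun i => hp i x
  rw [hx]

theorem AlgebraicRing.continuous_affine (A : AlgebraicRing K) (a b : A.carrier) :
    Continuous fun y : A.carrier => a + b * y := by
  have hφ : IsPolyMap (fun x => A.add a.1 (A.mul b.1 x)) := by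
    intro j
    obtain ⟨p, hp⟩ := A.add_poly j
    choose q hq using A.mul_poly
    refine ⟨bind₁ (Sum.elim (fun i => C (a.1 i))
      (fun i => bind₁ (Sum.elim (fun i => C (b.1 i)) X) (q i))) p, fun x => ?_⟩
    show A.add a.1 (A.mul b.1 x) j = _
    rw [hp, eval_bind₁_aux]
    have hfun : (fun i => eval x (Sum.elim (fun i => C (a.1 i))
        (fun i => bind₁ (Sum.elim (fun i => C (b.1 i)) X) (q i)) i))
        = Sum.elim a.1 (A.mul b.1 x) := by
      funext v
      cases v with
      | inl i => simp
      | inr i =>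
        simp only [Sum.elim_inr, eval_bind₁_aux]
        rw [hq]
        have hw : (fun w => eval x (Sum.elim (fun i => C (b.1 i)) X w))
            = Sum.elim b.1 x := by
          funext w
          cases w with
          | inl i' => simp
          | inr i' => simp
        rw [hw]
    rw [hfun]
  letI : TopologicalSpace (Fin A.n → K) := zariskiTop K A.n
  have hval : Continuous (Subtype.val : A.carrier → (Fin A.n → K)) :=
    continuous_induced_dom
  have h1 : Continuous (fun y : A.carrier => A.add a.1 (A.mul b.1 y.1)) :=
    hφ.continuous_zariski.comp hval
  exact continuous_induced_rng.mpr h1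

end AuxLemmas

/-- If `R` is a commutative semilocal ring, `A` a connected commutative
algebraic ring over an algebraically closed field `K`, and `f : R → A` an abstract ring
homomorphism with Zariski-dense image, then `f(R^×)` is Zariski-dense in `A`. -/
theorem dense_image_of_units_of_semilocal (K : Type*) [Field K] [IsAlgClosed K]
    (R : Type*) [CommRing R] (hsemilocal : {I : Ideal R | I.IsMaximal}.Finite)
    (A : CommAlgebraicRing K)
    (hconn : @IsIrreducible _ (zariskiTop K A.n) A.toAlgebraicRing.carrier)
    (f : R →+* A.carrier) (hdense : DenseRange ⇑f) :
    Dense (Set.range fun u : Rˣ => f (u : R)) := by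
  classical
  -- the closure of the image of the units
  set T : Set A.carrier := closure (Set.range fun u : Rˣ => f (u : R)) with hTdef
  have hTc : IsClosed T := isClosed_closure
  haveI hpre : PreirreducibleSpace A.carrier :=
    ⟨(@Subtype.preirreducibleSpace _ (zariskiTop K A.n) _ hconn.2).isPreirreducible_univ⟩
  -- key closure principle
  have key : ∀ (φ : A.carrier → A.carrier), Continuous φ → ∀ (D : Set A.carrier), Dense D →
      (∀ d ∈ D, φ d ∈ T) → ∀ x, φ x ∈ T := by
    intro φ hφ D hD hmap x
    have h1 : φ x ∈ φ '' closure D := ⟨x, hD x, rfl⟩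
    have h2 := image_closure_subset_closure_image hφ h1
    have h3 : closure (φ '' D) ⊆ T :=
      closure_minimal (by rintro _ ⟨d, hd, rfl⟩; exact hmap d hd) hTc
    exact h3 h2
  -- the finite set of all maximal ideals
  set M : Finset (Ideal R) := hsemilocal.toFinset with hMdef
  have hM : ∀ {I : Ideal R}, I ∈ M ↔ I.IsMaximal := fun {I} => hsemilocal.mem_toFinset
  -- unit criterion
  have unit_crit : ∀ r : R, (∀ I ∈ M, r ∉ I) → IsUnit r := by
    intro r hr
    by_contra hu
    obtain ⟨I, hImax, hle⟩ := Ideal.exists_le_maximal (Ideal.span {r})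
      (fun h => hu (Ideal.span_singleton_eq_top.mp h))
    exact hr I (hM.mpr hImax) (hle (Ideal.subset_span rfl))
  -- choose elements separating pairs of distinct maximal ideals
  have hcex : ∀ I J : Ideal R, ∃ x : R, I ∈ M → J ∈ M → I ≠ J → x ∈ J ∧ x ∉ I := by
    intro I J
    by_cases h : I ∈ M ∧ J ∈ M ∧ I ≠ J
    · obtain ⟨hI, hJ, hne⟩ := h
      have hle : ¬J ≤ I := by
        intro hle
        exact hne ((hM.mp hJ).eq_of_le (hM.mp hI).ne_top hle).symm
      obtain ⟨x, hxJ, hxI⟩ := SetLike.not_le_iff_exists.mp hle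
      exact ⟨x, fun _ _ _ => ⟨hxJ, hxI⟩⟩
    · exact ⟨0, fun hI hJ hne => absurd ⟨hI, hJ, hne⟩ h⟩
  choose c hc using hcex
  -- the quasi-idempotents e I
  set e : Ideal R → R := fun I => ∏ J ∈ M.erase I, c I J with hedef
  have heJ : ∀ I ∈ M, ∀ J ∈ M, I ≠ J → e J ∈ I := by
    intro I hI J hJ hne
    have hIe : I ∈ M.erase J := Finset.mem_erase.mpr ⟨hne, hI⟩
    have : e J = (∏ x ∈ (M.erase J).erase I, c J x) * c J I :=
      (Finset.prod_erase_mul (M.erase J) (c J) hIe).symm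
    rw [this]
    exact Ideal.mul_mem_left _ _ (hc J I hJ hI (Ne.symm hne)).1
  have heI : ∀ I ∈ M, e I ∉ I := by
    intro I hI hmem
    haveI : I.IsPrime := (hM.mp hI).isPrime
    obtain ⟨J, hJmem, hJin⟩ := Ideal.IsPrime.prod_mem_iff.mp hmem
    exact (hc I J hI (Finset.mem_of_mem_erase hJmem)
      (Ne.symm (Finset.mem_erase.mp hJmem).1)).2 hJin
  -- the sum of the e I is a unit
  have hs : IsUnit (∑ I ∈ M, e I) := by
    refine unit_crit _ ?_
    intro I hI hmem
    have h2 : ∑ J ∈ M.erase I, e J ∈ I :=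
      Ideal.sum_mem _ fun J hJ =>
        heJ I hI J (Finset.mem_of_mem_erase hJ) (Ne.symm (Finset.mem_erase.mp hJ).1)
    have h3 : e I ∈ I := by
      have hsum : (∑ J ∈ M, e J) = e I + ∑ J ∈ M.erase I, e J :=
        (Finset.add_sum_erase M e hI).symm
      have h4 := I.sub_mem hmem h2
      rw [hsum, add_sub_cancel_right] at h4
      exact h4
    exact heI I hI h3
  -- density of the image of the complement of each maximal ideal
  have hDmax : ∀ I ∈ M, Dense (⇑f '' {r : R | r ∉ I}) := by
    intro I hI
    set S1 : Set A.carrier := ⇑f '' (I : Set R) with hS1def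
    set S2 : Set A.carrier := ⇑f '' {r : R | r ∉ I} with hS2def
    have hcover : (Set.univ : Set A.carrier) ⊆ closure S1 ∪ closure S2 := by
      have hsub : Set.range ⇑f ⊆ S1 ∪ S2 := by
        rintro _ ⟨r, rfl⟩
        by_cases h : r ∈ I
        · exact Or.inl ⟨r, h, rfl⟩
        · exact Or.inr ⟨r, h, rfl⟩
      calc (Set.univ : Set A.carrier) = closure (Set.range ⇑f) := hdense.closure_eq.symm
        _ ⊆ closure (S1 ∪ S2) := closure_mono hsub
        _ = closure S1 ∪ closure S2 := closure_union
    rcases isPreirreducible_iff_isClosed_union_isClosed.mp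
        (PreirreducibleSpace.isPreirreducible_univ (X := A.carrier)) _ _
        isClosed_closure isClosed_closure hcover with h | h
    · -- f(I) is dense; translate by 1
      have hS1 : Dense S1 := fun x => h (Set.mem_univ x)
      have hcont : Continuous fun y : A.carrier => (1 : A.carrier) + (1 : A.carrier) * y :=
        A.toAlgebraicRing.continuous_affine 1 1
      have hcont' : Continuous fun y : A.carrier => (1 : A.carrier) + y := by
        simpa only [one_mul] using hcont
    -- image of S1 under translation lands in S2
      have himg : (fun y : A.carrier => (1 : A.carrier) + y) '' S1 ⊆ S2 := by
        rintro _ ⟨_, ⟨m, hm, rfl⟩, rfl⟩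
        refine ⟨1 + m, ?_, by rw [map_add, map_one]⟩
        intro hmem
        have h1 : (1 : R) ∈ I := by
          have := I.sub_mem hmem hm
          rwa [add_sub_cancel_right] at this
        exact (hM.mp hI).ne_top (I.eq_top_iff_one.mpr h1)
      intro x
      have hx1 : x ∈ (fun y : A.carrier => (1 : A.carrier) + y) '' closure S1 :=
        ⟨x - 1, hS1 _, by ring⟩
      have hx2 := image_closure_subset_closure_image hcont' hx1
      exact closure_mono himg hx2
    · exact fun x => h (Set.mem_univ x)
  -- gluing by induction over subsets of M
  have glue : ∀ N : Finset (Ideal R), N ⊆ M →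
      ∀ z : Ideal R → A.carrier, (∀ I ∈ M, I ∉ N → z I ∈ ⇑f '' {r : R | r ∉ I}) →
      (∑ I ∈ M, f (e I) * z I) ∈ T := by
    intro N
    induction N using Finset.induction_on with
    | empty =>
      intro _ z hz
      have hz' : ∀ I, ∃ r : R, I ∈ M → r ∉ I ∧ f r = z I := by
        intro I
        by_cases hI : I ∈ M
        · obtain ⟨r, hr, hfr⟩ := hz I hI (Finset.notMem_empty I)
          exact ⟨r, fun _ => ⟨hr, hfr⟩⟩
        · exact ⟨0, fun h => absurd h hI⟩
      choose r hr using hz'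
      have hu : IsUnit (∑ I ∈ M, e I * r I) := by
        refine unit_crit _ ?_
        intro I hI hmem
        have h2 : ∑ J ∈ M.erase I, e J * r J ∈ I :=
          Ideal.sum_mem _ fun J hJ =>
            Ideal.mul_mem_right _ _
              (heJ I hI J (Finset.mem_of_mem_erase hJ) (Ne.symm (Finset.mem_erase.mp hJ).1))
        have h3 : e I * r I ∈ I := by
          have hsum : (∑ J ∈ M, e J * r J) = e I * r I + ∑ J ∈ M.erase I, e J * r J :=
            (Finset.add_sum_erase M (fun J => e J * r J) hI).symm
          have h4 := I.sub_mem hmem h2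
          rw [hsum, add_sub_cancel_right] at h4
          exact h4
        haveI : I.IsPrime := (hM.mp hI).isPrime
        rcases this.mem_or_mem h3 with h | h
        · exact heI I hI h
        · exact (hr I hI).1 h
      have hrw : (∑ I ∈ M, f (e I) * z I) = f (∑ I ∈ M, e I * r I) := by
        rw [map_sum]
        exact Finset.sum_congr rfl fun I hI => by rw [map_mul, (hr I hI).2]
      rw [hrw]
      exact subset_closure ⟨hu.unit, congrArg f hu.unit_spec⟩
    | @insert I0 N hI0N ih =>
      intro hsub z hz
      have hNsub : N ⊆ M := fun J hJ => hsub (Finset.mem_insert_of_mem hJ)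
      have hI0M : I0 ∈ M := hsub (Finset.mem_insert_self _ _)
      set a : A.carrier := ∑ J ∈ M.erase I0, f (e J) * z J with hadef
      have hφ : Continuous fun t : A.carrier => a + f (e I0) * t :=
        A.toAlgebraicRing.continuous_affine a (f (e I0))
      have hmap : ∀ t ∈ ⇑f '' {r : R | r ∉ I0}, a + f (e I0) * t ∈ T := by
        intro t ht
        have hupd : ∀ I ∈ M, I ∉ N → Function.update z I0 t I ∈ ⇑f '' {r : R | r ∉ I} := by
          intro J hJ hJN
          by_cases hJI : J = I0
          · subst hJI
            rw [Function.update_self]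
            exact ht
          · rw [Function.update_of_ne hJI]
            exact hz J hJ (fun hmem => (Finset.mem_insert.mp hmem).elim hJI hJN)
        have hthis := ih hNsub (Function.update z I0 t) hupd
        have hsum : (∑ I ∈ M, f (e I) * Function.update z I0 t I)
            = f (e I0) * t + ∑ J ∈ M.erase I0, f (e J) * Function.update z I0 t J :=
          (Finset.add_sum_erase M (fun I => f (e I) * Function.update z I0 t I) hI0M).symm
            |>.trans (by rw [Function.update_self])
        have hre : (∑ J ∈ M.erase I0, f (e J) * Function.update z I0 t J) = a :=
          Finset.sum_congr rfl fun J hJ => by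
            rw [Function.update_of_ne (Finset.mem_erase.mp hJ).1]
        rw [hsum, hre, add_comm] at hthis
        exact hthis
      have hall := key _ hφ _ (hDmax I0 hI0M) hmap (z I0)
      have hsum2 : (∑ I ∈ M, f (e I) * z I) = a + f (e I0) * z I0 := by
        rw [add_comm a]
        exact ((Finset.add_sum_erase M (fun I => f (e I) * z I) hI0M).symm)
      rw [hsum2]
      exact hall
  -- conclusion
  intro x
  obtain ⟨u, hu⟩ := hs
  have hsv : (∑ I ∈ M, e I) * ((u⁻¹ : Rˣ) : R) = 1 := by
    rw [← hu]
    exact_mod_cast u.mul_inv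
  have h := glue M (Finset.Subset.refl M) (fun _ => f ((u⁻¹ : Rˣ) : R) * x)
    (fun I hI hIM => absurd hI hIM)
  have hrw : (∑ I ∈ M, f (e I) * (f ((u⁻¹ : Rˣ) : R) * x)) = x := by
    rw [← Finset.sum_mul, ← map_sum, ← mul_assoc, ← map_mul, hsv, map_one, one_mul]
  rw [hrw] at h
  exact h
end

section
/- Let K be an algebraically closed field of characteristic 0 and fix s distinct nonzero points a_1, …, a_s ∈ K^×. The ring homomorphism f: ℤ[X] → K^s, g(X) ↦ (g(a_1), …, g(a_s)), has Zariski-dense image in K^s (where K^s carries the product ring structure and the Zariski topology of affine s-space). -/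
open MvPolynomial

/-- A multivariate polynomial over a characteristic-zero field that vanishes at all
integer points is zero. -/
lemma mv_int_eval_zero {K : Type*} [Field K] [CharZero K] :
    ∀ {n : ℕ} (q : MvPolynomial (Fin n) K),
      (∀ c : Fin n → ℤ, eval (fun i => (c i : K)) q = 0) → q = 0 := by
  intro n
  induction n with
  | zero =>
      intro q h
      rw [eq_C_of_isEmpty q]
      have := h 0
      rw [eq_C_of_isEmpty q, eval_C] at this
      rw [this, map_zero]
  | succ n ih =>
      intro q h
      have hq' : finSuccEquiv K n q = 0 := by
        apply Polynomial.ext; intro k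
        rw [Polynomial.coeff_zero]
        apply ih
        intro c
        have hpoly :
            Polynomial.map (eval fun i => ((c i : K))) (finSuccEquiv K n q) = 0 := by
          apply Polynomial.eq_zero_of_infinite_isRoot
          apply (Set.infinite_range_of_injective (Int.cast_injective (α := K))).mono
          rintro _ ⟨m, rfl⟩
          show Polynomial.IsRoot _ _
          rw [Polynomial.IsRoot, ← eval_eq_eval_mv_eval']
          have hfun : (fun i => (((Fin.cons m c : Fin (n + 1) → ℤ) i : ℤ) : K)) =
              Fin.cons (m : K) (fun i => (c i : K)) := by
            funext i
            induction i using Fin.cases <;> simp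
          have := h (Fin.cons m c)
          rwa [hfun] at this
        have := congrArg (fun r => r.coeff k) hpoly
        simpa [Polynomial.coeff_map] using this
      exact (finSuccEquiv K n).injective (by rw [hq', map_zero])

/-- For distinct nonzero points `a 1, …, a s` of an algebraically
closed field `K` of characteristic `0`, the evaluation ring homomorphism
`ℤ[X] → K^s`, `g ↦ (g(a 1), …, g(a s))`, has Zariski-dense image. -/
theorem evaluation_hom_dense_image (K : Type*) [Field K] [IsAlgClosed K] [CharZero K]
    (s : ℕ) (a : Fin s → K) (hinj : Function.Injective a) (hne : ∀ i, a i ≠ 0) :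
    @Dense _ (zariskiTop K s)
      (Set.range fun g : Polynomial ℤ => fun i => Polynomial.aeval (a i) g) := by
  classical
  letI : TopologicalSpace (Fin s → K) := zariskiTop K s
  -- the generating sets, plus `univ`, form a basis
  have hb : TopologicalSpace.IsTopologicalBasis
      (insert Set.univ
        {U | ∃ p : MvPolynomial (Fin s) K, U = {x | eval x p ≠ 0}}) := by
    apply TopologicalSpace.isTopologicalBasis_of_subbasis_of_inter rfl
    rintro _ ⟨p, rfl⟩ _ ⟨q, rfl⟩
    refine ⟨p * q, ?_⟩
    ext x
    simp [mul_ne_zero_iff]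
  -- key step: a polynomial nonvanishing somewhere is nonvanishing at some image point
  have key : ∀ (p : MvPolynomial (Fin s) K) (x : Fin s → K), eval x p ≠ 0 →
      ∃ g : Polynomial ℤ, eval (fun i => Polynomial.aeval (a i) g) p ≠ 0 := by
    intro p x hx
    by_contra hcon
    push_neg at hcon
    set q : MvPolynomial (Fin s) K :=
      bind₁ (fun i : Fin s => ∑ k : Fin s, C (a i ^ (k : ℕ)) * X k) p with hqdef
    have hqeval : ∀ c : Fin s → K,
        eval c q = eval (fun i => ∑ k : Fin s, a i ^ (k : ℕ) * c k) p := by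
      intro c
      rw [hqdef]
      have h0 : eval c (bind₁ (fun i : Fin s => ∑ k : Fin s, C (a i ^ (k : ℕ)) * X k) p)
          = eval (fun i => eval c (∑ k : Fin s, C (a i ^ (k : ℕ)) * X k)) p :=
        eval₂Hom_bind₁ (RingHom.id K) c
          (fun i : Fin s => ∑ k : Fin s, C (a i ^ (k : ℕ)) * X k) p
      have harg : (fun i => eval c (∑ k : Fin s, C (a i ^ (k : ℕ)) * X k)) =
          fun i => ∑ k : Fin s, a i ^ (k : ℕ) * c k := by
        funext i
        simp
      rw [h0, harg]
    have hq0 : q = 0 := by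
      apply mv_int_eval_zero
      intro c
      rw [hqeval]
      have heq : (fun i => ∑ k : Fin s, a i ^ (k : ℕ) * ((c k : K))) =
          fun i => Polynomial.aeval (a i)
            (∑ k : Fin s, Polynomial.C (c k) * Polynomial.X ^ (k : ℕ)) := by
        funext i
        simp [mul_comm]
      rw [heq]
      exact hcon _
    -- invert the Vandermonde matrix to reach `x`
    have hdet : (Matrix.vandermonde a).det ≠ 0 := by
      rw [Matrix.det_vandermonde]
      apply Finset.prod_ne_zero_iff.2
      intro i _
      apply Finset.prod_ne_zero_iff.2
      intro j hj
      rw [Finset.mem_Ioi] at hj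
      exact sub_ne_zero.2 fun h => hj.ne' (hinj h)
    have hunit : IsUnit (Matrix.vandermonde a).det := hdet.isUnit
    set c : Fin s → K := Matrix.mulVec (Matrix.vandermonde a)⁻¹ x with hc
    have hMc : Matrix.mulVec (Matrix.vandermonde a) c = x := by
      rw [hc, Matrix.mulVec_mulVec, Matrix.mul_nonsing_inv _ hunit, Matrix.one_mulVec]
    have : eval x p = 0 := by
      have h1 := hqeval c
      rw [hq0, map_zero] at h1
      have h2 : (fun i => ∑ k : Fin s, a i ^ (k : ℕ) * c k) = x := by
        funext i
        rw [← hMc]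
        simp [Matrix.mulVec, Matrix.vandermonde, dotProduct]
      rw [h2] at h1
      exact h1.symm
    exact hx this
  rw [hb.dense_iff]
  rintro o (rfl | ⟨p, rfl⟩) ho
  · exact ⟨fun i => Polynomial.aeval (a i) 0, Set.mem_univ _, ⟨0, rfl⟩⟩
  · obtain ⟨x, hx⟩ := ho
    obtain ⟨g, hg⟩ := key p x hx
    exact ⟨fun i => Polynomial.aeval (a i) g, hg, ⟨g, rfl⟩⟩
end

section
/- Let K be an algebraically closed field of characteristic 0, n ≥ 1 an integer, B = K[ω] with ω^{n+1} = 0, and a ∈ K. The map f: ℤ[X] → B defined by g(X) ↦ Σ_{k=0}^{n} (g^{(k)}(a)/k!) ω^k is a ring homomorphism with Zariski-dense image in B (viewed as affine (n+1)-space over K). -/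
open MvPolynomial

/-- The `k`-th Taylor coefficient at `a` of an integer polynomial:
`g ↦ g⁽ᵏ⁾(a)/k!`. -/
noncomputable def taylorCoeff (K : Type*) [Field K] (a : K) (g : Polynomial ℤ) (k : ℕ) :
    K :=
  (Nat.factorial k : K)⁻¹ *
    Polynomial.aeval a ((fun q : Polynomial ℤ => Polynomial.derivative q)^[k] g)

/-- `taylorCoeff` is the `k`-th coefficient of the Taylor expansion at `a` of the image
of `g` in `K[X]`. -/
lemma taylorCoeff_eq {K : Type*} [Field K] [CharZero K] (a : K) (g : Polynomial ℤ) (k : ℕ) :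
    taylorCoeff K a g k = (Polynomial.taylor a (g.map (Int.castRingHom K))).coeff k := by
  have hmap : ((fun q : Polynomial ℤ => Polynomial.derivative q)^[k] g).map (Int.castRingHom K)
      = (Polynomial.derivative (R := K))^[k] (g.map (Int.castRingHom K)) := by
    rw [← Polynomial.iterate_derivative_map]
  rw [taylorCoeff, Polynomial.taylor_coeff, Polynomial.aeval_def, Polynomial.eval₂_eq_eval_map,
    show (algebraMap ℤ K) = Int.castRingHom K from rfl, hmap,
    ← Polynomial.factorial_smul_hasseDeriv]
  simp only [LinearMap.smul_apply]
  simp only [nsmul_eq_mul, Polynomial.eval_mul, Polynomial.eval_natCast]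
  rw [← mul_assoc, inv_mul_cancel₀ (by exact_mod_cast (Nat.factorial_pos k).ne'), one_mul]

/-- A multivariate polynomial over a field of characteristic zero vanishing at all integer
points vanishes everywhere. -/
lemma eval_eq_zero_of_int {K : Type*} [Field K] [CharZero K] {m : ℕ}
    (q : MvPolynomial (Fin m) K)
    (h : ∀ b : Fin m → ℤ, eval (fun i => (b i : K)) q = 0) (x : Fin m → K) :
    eval x q = 0 := by
  suffices H : ∀ j : ℕ, ∀ x : Fin m → K,
      (∀ i : Fin m, j ≤ (i : ℕ) → ∃ z : ℤ, x i = (z : K)) → eval x q = 0 from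
    H m x (fun i hi => absurd hi (by omega))
  intro j
  induction j with
  | zero =>
    intro x hx
    choose z hz using fun i => hx i (Nat.zero_le _)
    rw [show x = fun i => (z i : K) from funext hz]
    exact h z
  | succ j ih =>
    intro x hx
    set f : Fin m → Polynomial K :=
      fun i => if (i : ℕ) = j then Polynomial.X else Polynomial.C (x i) with hf
    set r : Polynomial K := MvPolynomial.aeval f q with hr
    have key : ∀ t : K, Polynomial.eval t r
        = eval (fun i : Fin m => if (i : ℕ) = j then t else x i) q := by
      intro t
      have h1 := AlgHom.congr_fun
        (MvPolynomial.comp_aeval (f := f) (Polynomial.aeval t : Polynomial K →ₐ[K] K)) q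
      simp only [AlgHom.coe_comp, Function.comp_apply] at h1
      rw [hr]
      rw [show Polynomial.eval t (MvPolynomial.aeval f q)
          = (Polynomial.aeval t) (MvPolynomial.aeval f q) from
        (congrFun (Polynomial.coe_aeval_eq_eval t) _).symm, h1]
      rw [show (MvPolynomial.aeval fun i => (Polynomial.aeval t) (f i)) q
          = eval (fun i => (Polynomial.aeval t) (f i)) q from
        RingHom.congr_fun (MvPolynomial.coe_aeval_eq_eval _) q]
      refine congrFun (congrArg _ (congrArg eval (funext fun i => ?_))) q
      by_cases hij : (i : ℕ) = j <;> simp [hf, hij]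
    have hroots : r = 0 := by
      apply Polynomial.eq_zero_of_infinite_isRoot
      apply Set.Infinite.mono (s := Set.range (Int.cast : ℤ → K))
      · rintro _ ⟨z, rfl⟩
        refine Set.mem_setOf.2 ?_
        unfold Polynomial.IsRoot
        rw [key (z : K)]
        apply ih
        intro i hij
        by_cases hij' : (i : ℕ) = j
        · exact ⟨z, by simp [hij']⟩
        · obtain ⟨w, hw⟩ := hx i (by omega)
          exact ⟨w, by simp [hij', hw]⟩
      · exact Set.infinite_range_of_injective Int.cast_injective
    have heq : eval x q = Polynomial.eval (if hj : j < m then x ⟨j, hj⟩ else 0) r := by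
      rw [key]
      refine congrFun (congrArg _ (congrArg eval (funext fun i => ?_))) q
      by_cases hij : (i : ℕ) = j
      · have hj : j < m := hij ▸ i.isLt
        simp only [hij, if_pos rfl, dif_pos hj]
        congr 1
        exact Fin.ext hij
      · simp [hij]
    rw [heq, hroots, Polynomial.eval_zero]

/-- Coefficients of the Taylor shift of an explicit sum. -/
lemma taylor_sum_coeff {K : Type*} [Field K] (a : K) {n : ℕ} (b : Fin (n + 1) → K) (k : ℕ) :
    (Polynomial.taylor a
        (∑ j : Fin (n + 1), Polynomial.C (b j) * Polynomial.X ^ (j : ℕ))).coeff k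
      = ∑ j : Fin (n + 1),
          (Polynomial.taylor a ((Polynomial.X : Polynomial K) ^ (j : ℕ))).coeff k * b j := by
  rw [map_sum, Polynomial.finset_sum_coeff]
  refine Finset.sum_congr rfl fun j _ => ?_
  rw [← Polynomial.smul_eq_C_mul, map_smul, Polynomial.coeff_smul, smul_eq_mul, mul_comm]

/-- Surjectivity of the linear map sending coefficients of a polynomial of degree `≤ n`
to its Taylor coefficients at `a`. -/
lemma taylor_surj (K : Type*) [Field K] (a : K) (n : ℕ) (y : Fin (n + 1) → K) :
    ∃ b : Fin (n + 1) → K, ∀ k : Fin (n + 1),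
      ∑ j : Fin (n + 1),
        (Polynomial.taylor a ((Polynomial.X : Polynomial K) ^ (j : ℕ))).coeff k * b j = y k := by
  classical
  set P : Polynomial K := ∑ k : Fin (n + 1), Polynomial.C (y k) * Polynomial.X ^ (k : ℕ) with hP
  set G : Polynomial K := Polynomial.taylor (-a) P with hG
  refine ⟨fun j => G.coeff j, fun k => ?_⟩
  have hdegP : P.natDegree < n + 1 := by
    apply Nat.lt_succ_of_le
    refine Polynomial.natDegree_sum_le_of_forall_le _ _ fun i _ => ?_
    exact (Polynomial.natDegree_C_mul_X_pow_le _ _).trans (Nat.lt_succ_iff.mp i.isLt)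
  have hdegG : G.natDegree < n + 1 := by
    rw [hG, Polynomial.natDegree_taylor]; exact hdegP
  have hGsum : ∑ j : Fin (n + 1), Polynomial.C (G.coeff j) * Polynomial.X ^ (j : ℕ) = G :=
    calc ∑ j : Fin (n + 1), Polynomial.C (G.coeff j) * Polynomial.X ^ (j : ℕ)
        = ∑ i ∈ Finset.range (n + 1), Polynomial.C (G.coeff i) * Polynomial.X ^ i :=
          Fin.sum_univ_eq_sum_range (fun i => Polynomial.C (G.coeff i) * Polynomial.X ^ i) (n + 1)
      _ = ∑ i ∈ Finset.range (n + 1), Polynomial.monomial i (G.coeff i) :=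
          Finset.sum_congr rfl fun i _ => Polynomial.C_mul_X_pow_eq_monomial
      _ = G := (Polynomial.as_sum_range' G (n + 1) hdegG).symm
  have key : ∑ j : Fin (n + 1),
      (Polynomial.taylor a ((Polynomial.X : Polynomial K) ^ (j : ℕ))).coeff k * G.coeff j
      = (Polynomial.taylor a G).coeff k := by
    conv_rhs => rw [← hGsum]
    rw [map_sum, Polynomial.finset_sum_coeff]
    refine Finset.sum_congr rfl fun j _ => ?_
    rw [← Polynomial.smul_eq_C_mul, map_smul, Polynomial.coeff_smul, smul_eq_mul, mul_comm]
  rw [key, hG, Polynomial.taylor_taylor, add_neg_cancel, Polynomial.taylor_zero, hP,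
    Polynomial.finset_sum_coeff]
  rw [Finset.sum_congr rfl (fun i (_ : i ∈ Finset.univ) => by
    rw [Polynomial.coeff_C_mul, Polynomial.coeff_X_pow])]
  simp [Fin.val_eq_val]

/-- A polynomial vanishing on all truncated Taylor vectors of integer polynomials
vanishes identically. -/
lemma eval_taylorCoeff_zero {K : Type*} [Field K] [CharZero K] (a : K) (n : ℕ)
    (p : MvPolynomial (Fin (n + 1)) K)
    (h : ∀ g : Polynomial ℤ, eval (fun k : Fin (n + 1) => taylorCoeff K a g k) p = 0)
    (x : Fin (n + 1) → K) : eval x p = 0 := by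
  classical
  set M : Fin (n + 1) → Fin (n + 1) → K :=
    fun k j => (Polynomial.taylor a ((Polynomial.X : Polynomial K) ^ (j : ℕ))).coeff k with hM
  set q : MvPolynomial (Fin (n + 1)) K :=
    bind₁ (fun k => ∑ j : Fin (n + 1), MvPolynomial.C (M k j) * MvPolynomial.X j) p with hq
  have hevalq : ∀ b : Fin (n + 1) → K,
      eval b q = eval (fun k => ∑ j : Fin (n + 1), M k j * b j) p := by
    intro b
    have h2 : eval b q = eval (fun k =>
        eval b (∑ j : Fin (n + 1), MvPolynomial.C (M k j) * MvPolynomial.X j)) p :=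
      eval₂Hom_bind₁ (RingHom.id K) b _ p
    rw [h2]
    simp only [map_sum, eval_mul, eval_C, eval_X]
  have hZ : ∀ b : Fin (n + 1) → ℤ, eval (fun i => (b i : K)) q = 0 := by
    intro b
    rw [hevalq]
    have hfun : (fun k : Fin (n + 1) => ∑ j : Fin (n + 1), M k j * ((b j : ℤ) : K))
        = fun k : Fin (n + 1) =>
          taylorCoeff K a (∑ j : Fin (n + 1), Polynomial.C (b j) * Polynomial.X ^ (j : ℕ)) k := by
      funext k
      rw [taylorCoeff_eq]
      have hmap : (∑ j : Fin (n + 1),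
            Polynomial.C (b j) * Polynomial.X ^ (j : ℕ)).map (Int.castRingHom K)
          = ∑ j : Fin (n + 1), Polynomial.C ((b j : K)) * Polynomial.X ^ (j : ℕ) := by
        rw [Polynomial.map_sum]
        refine Finset.sum_congr rfl fun j _ => ?_
        rw [Polynomial.map_mul, Polynomial.map_C, Polynomial.map_pow, Polynomial.map_X]
        rfl
      rw [hmap, taylor_sum_coeff]
    rw [hfun]
    exact h _
  obtain ⟨b, hb⟩ := taylor_surj K a n x
  have hall := eval_eq_zero_of_int q hZ b
  rw [hevalq] at hall
  rw [show x = fun k => ∑ j : Fin (n + 1), M k j * b j from funext fun k => (hb k).symm]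
  exact hall

/-- For `K` algebraically closed of characteristic `0`, `n ≥ 1` and
`a ∈ K`, the truncated Taylor expansion map `ℤ[X] → B = K[ω]` (`ω^{n+1} = 0`),
`g ↦ Σ_{k≤n} (g⁽ᵏ⁾(a)/k!) ωᵏ`, is a ring homomorphism (for the truncated-polynomial
multiplication) with Zariski-dense image in `B`, viewed as affine `(n+1)`-space. -/
theorem truncated_taylor_ringHom_dense (K : Type*) [Field K] [IsAlgClosed K] [CharZero K]
    (n : ℕ) (hn : 1 ≤ n) (a : K) :
    (∀ k : ℕ, taylorCoeff K a 1 k = if k = 0 then 1 else 0) ∧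
    (∀ g h : Polynomial ℤ, ∀ k : ℕ,
      taylorCoeff K a (g + h) k = taylorCoeff K a g k + taylorCoeff K a h k) ∧
    (∀ g h : Polynomial ℤ, ∀ k : ℕ, k ≤ n →
      taylorCoeff K a (g * h) k =
        ∑ ij ∈ Finset.HasAntidiagonal.antidiagonal k, taylorCoeff K a g ij.1 * taylorCoeff K a h ij.2) ∧
    @Dense _ (zariskiTop K (n + 1))
      (Set.range fun g : Polynomial ℤ => fun k : Fin (n + 1) => taylorCoeff K a g k) := by
  classical
  refine ⟨?_, ?_, ?_, ?_⟩
  · intro k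
    rw [taylorCoeff_eq, Polynomial.map_one, Polynomial.taylor_one]
    simp [Polynomial.coeff_C, Polynomial.coeff_one]
  · intro g h k
    simp only [taylorCoeff_eq, Polynomial.map_add, map_add, Polynomial.coeff_add]
  · intro g h k _
    rw [taylorCoeff_eq, Polynomial.map_mul, Polynomial.taylor_mul, Polynomial.coeff_mul]
    exact Finset.sum_congr rfl fun ij _ => by rw [taylorCoeff_eq, taylorCoeff_eq]
  · letI : TopologicalSpace (Fin (n + 1) → K) := zariskiTop K (n + 1)
    have hbasis : TopologicalSpace.IsTopologicalBasis
        (insert Set.univ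
          {U | ∃ p : MvPolynomial (Fin (n + 1)) K, U = {x | eval x p ≠ 0}}) := by
      refine TopologicalSpace.isTopologicalBasis_of_subbasis_of_inter rfl ?_
      rintro s ⟨p, rfl⟩ t ⟨p', rfl⟩
      exact ⟨p * p', by ext x; simp [mul_eq_zero, not_or]⟩
    rw [hbasis.dense_iff]
    rintro o ho ⟨x0, hx0⟩
    rcases Set.mem_insert_iff.mp ho with rfl | ⟨p, rfl⟩
    · exact ⟨fun k : Fin (n + 1) => taylorCoeff K a 1 k, Set.mem_univ _, ⟨1, rfl⟩⟩
    · by_contra hc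
      have hzero : ∀ g : Polynomial ℤ,
          eval (fun k : Fin (n + 1) => taylorCoeff K a g k) p = 0 := by
        intro g
        by_contra hg
        exact hc ⟨_, hg, ⟨g, rfl⟩⟩
      exact hx0 (eval_taylorCoeff_zero a n p hzero x0)
end
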